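/- arXiv:1511.08768 — 6 statements merged into one kernel-verified Lean document; each statement's English description precedes it below -/
import Mathlib

section
/- Let f : ℝⁿ → ℝ be twice continuously differentiable, let x ∈ ℝⁿ, δ > 0, and suppose that the operator norm of the Hessian of f is bounded by H at every point of the closed ball of radius δ√n around x. Then for every sign vector Δ ∈ {−1,1}ⁿ and every index i, |(f(x + δΔ) − f(x))/(δΔᵢ) − Σⱼ (∂f/∂xⱼ)(x)·ΔⱼΔᵢ| ≤ (H·n·δ)/2. In particular the simultaneous perturbation estimate (f(x + δΔ) − f(x))/(δΔᵢ) equals (∂f/∂xᵢ)(x) + Σ_{j≠i}(∂f/∂xⱼ)(x)·ΔⱼΔᵢ up to an error of at most (H·n·δ)/2. -/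
open scoped RealInnerProductSpace

/-- Deterministic error bound for the simultaneous perturbation
estimate: if the Hessian of `f` has operator norm at most `H` on the closed ball
of radius `δ√n` around `x`, then for any sign vector `Δ ∈ {-1,1}ⁿ` and index `i`,
the SP estimate `(f(x + δΔ) - f(x))/(δΔᵢ)` equals `∑ⱼ ∂ⱼf(x)·ΔⱼΔᵢ`, i.e.
`∂ᵢf(x) + ∑_{j≠i} ∂ⱼf(x)·ΔⱼΔᵢ`, up to an error of at most `Hnδ/2`. -/
theorem stmt_1 (n : ℕ) (f : EuclideanSpace ℝ (Fin n) → ℝ) (hf : ContDiff ℝ 2 f)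
    (x : EuclideanSpace ℝ (Fin n)) (δ H : ℝ) (hδ : 0 < δ)
    (hH : ∀ y ∈ Metric.closedBall x (δ * Real.sqrt n),
      ‖fderiv ℝ (fderiv ℝ f) y‖ ≤ H)
    (Δ : EuclideanSpace ℝ (Fin n)) (hΔ : ∀ i, Δ i = 1 ∨ Δ i = -1) (i : Fin n) :
    |(f (x + δ • Δ) - f x) / (δ * Δ i) -
        ∑ j, gradient f x j * (Δ j * Δ i)| ≤ H * n * δ / 2 ∧
    |(f (x + δ • Δ) - f x) / (δ * Δ i) -
        (gradient f x i +
          ∑ j ∈ Finset.univ.erase i, gradient f x j * (Δ j * Δ i))| ≤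
      H * n * δ / 2 := by
  classical
  set v : EuclideanSpace ℝ (Fin n) := δ • Δ with hv
  have hΔsq : ∀ j, Δ j * Δ j = 1 := by
    intro j; rcases hΔ j with h | h <;> rw [h] <;> norm_num
  have hΔnorm : ‖Δ‖ = Real.sqrt n := by
    rw [EuclideanSpace.norm_eq]
    congr 1
    rw [Finset.sum_congr rfl (fun j _ => ?_), Finset.sum_const, Finset.card_univ,
      Fintype.card_fin, nsmul_eq_mul, mul_one]
    rcases hΔ j with h | h <;> rw [h] <;> norm_num
  have hvnorm : ‖v‖ = δ * Real.sqrt n := by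
    rw [hv, norm_smul, hΔnorm, Real.norm_eq_abs, abs_of_pos hδ]
  have hmem : ∀ t ∈ Set.Icc (0:ℝ) 1, x + t • v ∈ Metric.closedBall x (δ * Real.sqrt n) := by
    intro t ht
    rw [Metric.mem_closedBall, dist_eq_norm, add_sub_cancel_left, norm_smul,
      Real.norm_eq_abs, abs_of_nonneg ht.1, hvnorm]
    calc t * (δ * Real.sqrt n) ≤ 1 * (δ * Real.sqrt n) := by
          apply mul_le_mul_of_nonneg_right ht.2
          positivity
      _ = δ * Real.sqrt n := one_mul _
  have hf1 : ContDiff ℝ 1 (fderiv ℝ f) := hf.fderiv_right (by norm_num)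
  have hfd : Differentiable ℝ f := hf.differentiable (by norm_num)
  have hfd1 : Differentiable ℝ (fderiv ℝ f) := hf1.differentiable one_ne_zero
  set g' : ℝ → ℝ := fun t => fderiv ℝ f (x + t • v) v with hg'def
  set g'' : ℝ → ℝ := fun t => fderiv ℝ (fderiv ℝ f) (x + t • v) v v with hg''def
  have hcurve : ∀ t : ℝ, HasDerivAt (fun t : ℝ => x + t • v) v t := by
    intro t
    simpa using ((hasDerivAt_id t).smul_const v).const_add x
  have hg : ∀ t : ℝ, HasDerivAt (fun t => f (x + t • v)) (g' t) t := by
    intro t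
    exact (hfd (x + t • v)).hasFDerivAt.comp_hasDerivAt t (hcurve t)
  have hg' : ∀ t : ℝ, HasDerivAt g' (g'' t) t := by
    intro t
    have h1 : HasDerivAt (fun t => fderiv ℝ f (x + t • v))
        (fderiv ℝ (fderiv ℝ f) (x + t • v) v) t :=
      (hfd1 (x + t • v)).hasFDerivAt.comp_hasDerivAt t (hcurve t)
    simpa [hg'def] using h1.clm_apply (hasDerivAt_const t v)
  have hHv : ∀ t ∈ Set.Icc (0:ℝ) 1, ‖g'' t‖ ≤ H * ‖v‖ ^ 2 := by
    intro t ht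
    have h1 := hH _ (hmem t ht)
    calc ‖g'' t‖ ≤ ‖fderiv ℝ (fderiv ℝ f) (x + t • v) v‖ * ‖v‖ :=
          (fderiv ℝ (fderiv ℝ f) (x + t • v) v).le_opNorm v
      _ ≤ ‖fderiv ℝ (fderiv ℝ f) (x + t • v)‖ * ‖v‖ * ‖v‖ := by
          apply mul_le_mul_of_nonneg_right _ (norm_nonneg v)
          exact (fderiv ℝ (fderiv ℝ f) (x + t • v)).le_opNorm v
      _ ≤ H * ‖v‖ * ‖v‖ := by
          apply mul_le_mul_of_nonneg_right _ (norm_nonneg v)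
          exact mul_le_mul_of_nonneg_right h1 (norm_nonneg v)
      _ = H * ‖v‖ ^ 2 := by ring
  have hlip : ∀ t ∈ Set.Icc (0:ℝ) 1, ‖g' t - g' 0‖ ≤ (H * ‖v‖ ^ 2) * t := by
    intro t ht
    have := (convex_Icc (0:ℝ) 1).norm_image_sub_le_of_norm_hasDerivWithin_le
      (fun s hs => (hg' s).hasDerivWithinAt) hHv
      (Set.left_mem_Icc.2 zero_le_one) ht
    simpa [abs_of_nonneg ht.1] using this
  have hcont : Continuous g' := by
    have hc2 : Continuous fun t : ℝ => x + t • v :=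
      continuous_const.add (continuous_id.smul continuous_const)
    have : Continuous fun t : ℝ => fderiv ℝ f (x + t • v) :=
      hf1.continuous.comp hc2
    exact this.clm_apply continuous_const
  have hint : IntervalIntegrable g' MeasureTheory.volume 0 1 :=
    hcont.intervalIntegrable 0 1
  have hFTC : ∫ t in (0:ℝ)..1, g' t = f (x + v) - f x := by
    have := intervalIntegral.integral_eq_sub_of_hasDerivAt
      (f := fun t => f (x + t • v)) (f' := g') (a := 0) (b := 1)
      (fun t _ => hg t) hint
    simpa using this
  have hkey : |f (x + v) - f x - g' 0| ≤ H * ‖v‖ ^ 2 / 2 := by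
    have heq : f (x + v) - f x - g' 0 = ∫ t in (0:ℝ)..1, (g' t - g' 0) := by
      rw [intervalIntegral.integral_sub hint (intervalIntegrable_const), hFTC]
      simp
    rw [heq]
    have hb : IntervalIntegrable (fun t => (H * ‖v‖ ^ 2) * t) MeasureTheory.volume 0 1 := by
      exact (continuous_const.mul continuous_id).intervalIntegrable 0 1
    calc ‖∫ t in (0:ℝ)..1, (g' t - g' 0)‖
        ≤ |∫ t in (0:ℝ)..1, (H * ‖v‖ ^ 2) * t| := by
          apply intervalIntegral.norm_integral_le_abs_of_norm_le _ hb
          filter_upwards [MeasureTheory.ae_restrict_mem measurableSet_uIoc] with t ht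
          have ht' : t ∈ Set.Icc (0:ℝ) 1 := by
            rw [Set.uIoc_of_le zero_le_one] at ht
            exact ⟨le_of_lt ht.1, ht.2⟩
          exact hlip t ht'
      _ = H * ‖v‖ ^ 2 / 2 := by
          rw [intervalIntegral.integral_const_mul, integral_id]
          rw [abs_of_nonneg]
          · ring
          · have hH0 : 0 ≤ H := le_trans (norm_nonneg (fderiv ℝ (fderiv ℝ f) x))
              (hH x (Metric.mem_closedBall_self (by positivity)))
            positivity
  have hv2 : ‖v‖ ^ 2 = δ ^ 2 * n := by
    rw [hvnorm, mul_pow, Real.sq_sqrt (Nat.cast_nonneg n)]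
  -- relate gradient and fderiv
  have hgrad : ∀ y : EuclideanSpace ℝ (Fin n), ⟪gradient f x, y⟫ = fderiv ℝ f x y := by
    intro y
    rw [gradient]
    exact InnerProductSpace.toDual_symm_apply
  have hsum : ∑ j, gradient f x j * (Δ j * Δ i) = fderiv ℝ f x Δ * Δ i := by
    rw [← hgrad Δ, PiLp.inner_apply]
    simp only [RCLike.inner_apply, starRingEnd_apply, star_trivial]
    rw [Finset.sum_mul]
    exact Finset.sum_congr rfl (fun j _ => by ring)
  have hg'0 : g' 0 = δ * fderiv ℝ f x Δ := by
    simp [hg'def, hv]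
  -- final computation
  have hmain : |(f (x + δ • Δ) - f x) / (δ * Δ i) -
      ∑ j, gradient f x j * (Δ j * Δ i)| ≤ H * n * δ / 2 := by
    have hne : δ ≠ 0 := ne_of_gt hδ
    have hexp : (f (x + δ • Δ) - f x) / (δ * Δ i) -
        ∑ j, gradient f x j * (Δ j * Δ i)
        = (f (x + v) - f x - g' 0) * Δ i / δ := by
      rw [hsum, hg'0, ← hv]
      rcases hΔ i with h | h
      · rw [h]; field_simp
      · rw [h]; field_simp
        ring
    rw [hexp]
    have habs : |(f (x + v) - f x - g' 0) * Δ i / δ|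
        = |f (x + v) - f x - g' 0| / δ := by
      rw [abs_div, abs_mul, abs_of_pos hδ]
      rcases hΔ i with h | h <;> rw [h] <;> norm_num
    rw [habs, div_le_iff₀ hδ]
    calc |f (x + v) - f x - g' 0| ≤ H * ‖v‖ ^ 2 / 2 := hkey
      _ = H * n * δ / 2 * δ := by rw [hv2]; ring
  refine ⟨hmain, ?_⟩
  have : gradient f x i + ∑ j ∈ Finset.univ.erase i, gradient f x j * (Δ j * Δ i)
      = ∑ j, gradient f x j * (Δ j * Δ i) := by
    rw [← Finset.add_sum_erase Finset.univ _ (Finset.mem_univ i), hΔsq i, mul_one]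
  rw [this]
  exact hmain
end

section
/- Let f : ℝⁿ → ℝ be twice continuously differentiable, let x ∈ ℝⁿ, δ > 0, and suppose the operator norm of the Hessian of f is bounded by H on the closed ball of radius δ√n around x. Let Δ be a random vector uniformly distributed on {−1,1}ⁿ. Then for every index i, the expectation of the simultaneous perturbation estimate satisfies |E[(f(x + δΔ) − f(x))/(δΔᵢ)] − (∂f/∂xᵢ)(x)| ≤ (H·n·δ)/2; i.e., the SP estimate of the i-th partial derivative is unbiased up to an O(δ) error. -/
open scoped RealInnerProductSpace


lemma taylor2_bound {E : Type*} [NormedAddCommGroup E] [NormedSpace ℝ E]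
    (f : E → ℝ) (hf : ContDiff ℝ 2 f) (x v : E) (H : ℝ)
    (hH : ∀ y ∈ Metric.closedBall x ‖v‖, ‖fderiv ℝ (fderiv ℝ f) y‖ ≤ H) :
    |f (x + v) - f x - fderiv ℝ f x v| ≤ H * ‖v‖ ^ 2 / 2 := by
  have hdf : Differentiable ℝ f := hf.differentiable (by norm_num)
  have hdf' : Differentiable ℝ (fderiv ℝ f) :=
    (hf.fderiv_right (m := 1) (by norm_num)).differentiable (by norm_num)
  have hcont' : Continuous (fderiv ℝ f) := hdf'.continuous
  set g : ℝ → ℝ := fun t => fderiv ℝ f (x + t • v) v with hg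
  have hline : ∀ t : ℝ, HasDerivAt (fun t : ℝ => x + t • v) v t := by
    intro t
    simpa using (hasDerivAt_id t).smul_const v |>.const_add x
  have hderiv : ∀ t : ℝ, HasDerivAt (fun t => f (x + t • v)) (g t) t := by
    intro t
    have := (hdf (x + t • v)).hasFDerivAt.comp_hasDerivAt t (hline t)
    simpa [hg, Function.comp_def] using this
  have hgc : Continuous g := by
    have : Continuous fun t : ℝ => x + t • v := by continuity
    exact ((hcont'.comp this).clm_apply continuous_const)
  have hftc : ∫ t in (0:ℝ)..1, g t = f (x + v) - f x := by
    have := intervalIntegral.integral_eq_sub_of_hasDerivAt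
      (f := fun t => f (x + t • v)) (f' := g)
      (fun t _ => hderiv t) (hgc.intervalIntegrable 0 1)
    simpa using this
  -- bound |g t - g 0| ≤ H * ‖v‖^2 * t on [0,1]
  have hmem : ∀ t : ℝ, t ∈ Set.Icc (0:ℝ) 1 → x + t • v ∈ Metric.closedBall x ‖v‖ := by
    intro t ht
    simp only [Metric.mem_closedBall, dist_eq_norm, add_sub_cancel_left, norm_smul,
      Real.norm_eq_abs]
    calc |t| * ‖v‖ ≤ 1 * ‖v‖ := by
          apply mul_le_mul_of_nonneg_right _ (norm_nonneg v)
          rw [abs_of_nonneg ht.1]; exact ht.2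
      _ = ‖v‖ := one_mul _
  have hlip : ∀ t ∈ Set.Icc (0:ℝ) 1, |g t - g 0| ≤ (H * ‖v‖ ^ 2) * t := by
    intro t ht
    have hconv : Convex ℝ (Metric.closedBall x ‖v‖) := convex_closedBall _ _
    have key : ‖fderiv ℝ f (x + t • v) - fderiv ℝ f x‖ ≤ H * ‖x + t • v - x‖ := by
      apply hconv.norm_image_sub_le_of_norm_hasFDerivWithin_le
        (fun y hy => (hdf' y).hasFDerivAt.hasFDerivWithinAt) hH
        (Metric.mem_closedBall_self (norm_nonneg v)) (hmem t ht)
    have h2 : |g t - g 0| ≤ ‖fderiv ℝ f (x + t • v) - fderiv ℝ f x‖ * ‖v‖ := by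
      have : g t - g 0 = (fderiv ℝ f (x + t • v) - fderiv ℝ f x) v := by
        simp [hg]
      rw [this, ← Real.norm_eq_abs]
      exact (fderiv ℝ f (x + t • v) - fderiv ℝ f x).le_opNorm v
    have h3 : ‖x + t • v - x‖ = t * ‖v‖ := by
      simp [norm_smul, Real.norm_eq_abs, abs_of_nonneg ht.1]
    calc |g t - g 0| ≤ (H * ‖x + t • v - x‖) * ‖v‖ :=
          h2.trans (mul_le_mul_of_nonneg_right key (norm_nonneg v))
      _ = (H * ‖v‖ ^ 2) * t := by rw [h3]; ring
  have heq : f (x + v) - f x - fderiv ℝ f x v = ∫ t in (0:ℝ)..1, (g t - g 0) := by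
    rw [intervalIntegral.integral_sub (hgc.intervalIntegrable 0 1)
      (intervalIntegrable_const), hftc]
    simp [hg]
  rw [heq, ← Real.norm_eq_abs]
  have hb1 : ‖∫ t in (0:ℝ)..1, (g t - g 0)‖ ≤ ∫ t in (0:ℝ)..1, ‖g t - g 0‖ :=
    intervalIntegral.norm_integral_le_integral_norm (by norm_num)
  have hb2 : ∫ t in (0:ℝ)..1, ‖g t - g 0‖ ≤ ∫ t in (0:ℝ)..1, (H * ‖v‖ ^ 2) * t := by
    apply intervalIntegral.integral_mono_on (by norm_num)
    · exact ((hgc.sub continuous_const).norm).intervalIntegrable 0 1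
    · exact ((continuous_const.mul continuous_id).intervalIntegrable 0 1)
    · intro t ht
      rw [Real.norm_eq_abs]
      exact hlip t ht
  calc ‖∫ t in (0:ℝ)..1, (g t - g 0)‖ ≤ ∫ t in (0:ℝ)..1, (H * ‖v‖ ^ 2) * t := hb1.trans hb2
    _ = H * ‖v‖ ^ 2 / 2 := by
      rw [intervalIntegral.integral_const_mul, integral_id]
      ring


lemma sum_sign_mul (n : ℕ) (i j : Fin n) :
    ∑ s : Fin n → Bool, ((if s i then (1:ℝ) else -1) * (if s j then (1:ℝ) else -1)) =
      if i = j then (2:ℝ) ^ n else 0 := by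
  by_cases hij : i = j
  · subst hij
    rw [if_pos rfl]
    have h1 : ∀ s : Fin n → Bool,
        ((if s i then (1:ℝ) else -1) * (if s i then (1:ℝ) else -1)) = 1 := by
      intro s; cases s i <;> norm_num
    rw [Finset.sum_congr rfl fun s _ => h1 s, Finset.sum_const, Finset.card_univ]
    simp [Fintype.card_fun]
  · rw [if_neg hij]
    apply Finset.sum_ninvolution (fun s => Function.update s i (!(s i)))
    · intro s
      rw [Function.update_self, Function.update_of_ne (Ne.symm hij)]
      cases s i <;> cases s j <;> norm_num
    · intro s _ h
      have := congrFun h i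
      rw [Function.update_self] at this
      cases s i <;> simp_all
    · intro s; exact Finset.mem_univ _
    · intro s
      funext k
      by_cases hk : k = i
      · subst hk; simp
      · simp [Function.update_of_ne hk]

/-- Near-unbiasedness of the simultaneous perturbation estimate:
if `Δ` is uniformly distributed on `{-1,1}ⁿ` (encoded by `s : Fin n → Bool` with
sign `if s j then 1 else -1`, so the expectation is the average over all `2ⁿ`
sign vectors) and the Hessian of `f` has operator norm at most `H` on the closed
ball of radius `δ√n` around `x`, then the expectation of the SP estimate of the
`i`-th partial derivative is within `Hnδ/2` of `∂f/∂xᵢ(x)`. -/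
theorem stmt_2 (n : ℕ) (f : EuclideanSpace ℝ (Fin n) → ℝ) (hf : ContDiff ℝ 2 f)
    (x : EuclideanSpace ℝ (Fin n)) (δ H : ℝ) (hδ : 0 < δ)
    (hH : ∀ y ∈ Metric.closedBall x (δ * Real.sqrt n),
      ‖fderiv ℝ (fderiv ℝ f) y‖ ≤ H)
    (i : Fin n) :
    |(∑ s : Fin n → Bool,
        (f (x + δ • (WithLp.equiv 2 (Fin n → ℝ)).symm
            (fun j => if s j then (1 : ℝ) else -1)) - f x) /
          (δ * (if s i then (1 : ℝ) else -1))) / 2 ^ n -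
      gradient f x i| ≤ H * n * δ / 2 := by
  classical
  set L := fderiv ℝ f x with hL
  set ε : (Fin n → Bool) → Fin n → ℝ := fun s j => if s j then 1 else -1 with hε
  set Δ : (Fin n → Bool) → EuclideanSpace ℝ (Fin n) :=
    fun s => (WithLp.equiv 2 (Fin n → ℝ)).symm (ε s) with hΔ
  set e : Fin n → EuclideanSpace ℝ (Fin n) := fun j => EuclideanSpace.single j 1 with he
  have hε1 : ∀ s j, ε s j = 1 ∨ ε s j = -1 := by
    intro s j; by_cases h : s j <;> simp [hε, h]
  have hεne : ∀ s j, ε s j ≠ 0 := by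
    intro s j; rcases hε1 s j with h | h <;> rw [h] <;> norm_num
  have hH0 : 0 ≤ H := by
    have := hH x (Metric.mem_closedBall_self
      (mul_nonneg hδ.le (Real.sqrt_nonneg _)))
    exact (norm_nonneg (fderiv ℝ (fderiv ℝ f) x)).trans this
  -- norm of Δ s
  have hΔnorm : ∀ s, ‖Δ s‖ = Real.sqrt n := by
    intro s
    rw [EuclideanSpace.norm_eq]
    congr 1
    have : ∀ j, ‖Δ s j‖ ^ 2 = 1 := by
      intro j
      rcases hε1 s j with h | h <;>
        simp [hΔ, WithLp.equiv_symm_apply, PiLp.toLp_apply, h]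
    rw [Finset.sum_congr rfl fun j _ => this j]
    simp
  have hvnorm : ∀ s, ‖δ • Δ s‖ = δ * Real.sqrt n := by
    intro s
    rw [norm_smul, Real.norm_eq_abs, abs_of_pos hδ, hΔnorm]
  -- Taylor remainder
  obtain ⟨R, hRdef⟩ : ∃ R : (Fin n → Bool) → ℝ,
      ∀ s, f (x + δ • Δ s) - f x = L (δ • Δ s) + R s :=
    ⟨fun s => f (x + δ • Δ s) - f x - L (δ • Δ s), fun s => by ring⟩
  have hRle : ∀ s, |R s| ≤ H * δ ^ 2 * n / 2 := by
    intro s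
    have h0 := taylor2_bound f hf x (δ • Δ s) H (by rw [hvnorm]; exact hH)
    rw [hvnorm] at h0
    have hRs : R s = f (x + δ • Δ s) - f x - L (δ • Δ s) := by
      have := hRdef s; linarith
    rw [hRs]
    calc |f (x + δ • Δ s) - f x - L (δ • Δ s)| ≤ H * (δ * Real.sqrt n) ^ 2 / 2 := h0
      _ = H * δ ^ 2 * n / 2 := by
        rw [mul_pow, Real.sq_sqrt (Nat.cast_nonneg n)]; ring
  -- decomposition of Δ s
  have hdecomp : ∀ s, Δ s = ∑ j, ε s j • e j := by
    intro s
    ext k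
    simp only [hΔ, he, WithLp.equiv_symm_apply, PiLp.toLp_apply, WithLp.ofLp_sum]
    rw [Finset.sum_apply]
    simp [EuclideanSpace.single_apply]
  have hLΔ : ∀ s, L (Δ s) = ∑ j, ε s j * L (e j) := by
    intro s
    rw [hdecomp s, map_sum]
    simp
  -- gradient coordinate
  have hgrad : gradient f x i = L (e i) := by
    have h1 : ⟪gradient f x, e i⟫ = L (e i) := by
      rw [gradient, InnerProductSpace.toDual_symm_apply]
    rw [← h1, he, EuclideanSpace.inner_single_right]
    simp
  -- pointwise rewrite of terms
  have hterm : ∀ s, (f (x + δ • Δ s) - f x) / (δ * ε s i) =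
      (∑ j, ε s j * L (e j)) * ε s i + R s * ε s i / δ := by
    intro s
    have h1 : L (δ • Δ s) = δ * (∑ j, ε s j * L (e j)) := by
      rw [map_smul, smul_eq_mul, hLΔ]
    have hfs : f (x + δ • Δ s) - f x = δ * (∑ j, ε s j * L (e j)) + R s := by
      rw [hRdef s, h1]
    rw [hfs]
    rcases hε1 s i with h | h <;> rw [h] <;> field_simp [hδ.ne'] <;> ring
  -- sum of the main part
  have hmain : ∑ s : Fin n → Bool, (∑ j, ε s j * L (e j)) * ε s i
      = (2:ℝ) ^ n * L (e i) := by
    have h1 : ∀ j, (∑ s : Fin n → Bool, ε s j * L (e j) * ε s i)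
        = (if j = i then (2:ℝ) ^ n else 0) * L (e j) := by
      intro j
      calc (∑ s : Fin n → Bool, ε s j * L (e j) * ε s i)
          = (∑ s : Fin n → Bool, ε s j * ε s i) * L (e j) := by
            rw [Finset.sum_mul]; exact Finset.sum_congr rfl fun s _ => by ring
        _ = (if j = i then (2:ℝ) ^ n else 0) * L (e j) := by
            rw [sum_sign_mul]
    calc ∑ s : Fin n → Bool, (∑ j, ε s j * L (e j)) * ε s i
        = ∑ s : Fin n → Bool, ∑ j, ε s j * L (e j) * ε s i := by
          exact Finset.sum_congr rfl fun s _ => by rw [Finset.sum_mul]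
      _ = ∑ j, ∑ s : Fin n → Bool, ε s j * L (e j) * ε s i := Finset.sum_comm
      _ = ∑ j, (if j = i then (2:ℝ) ^ n else 0) * L (e j) :=
          Finset.sum_congr rfl fun j _ => h1 j
      _ = (2:ℝ) ^ n * L (e i) := by simp
  -- error sum bound
  have herr : |∑ s : Fin n → Bool, R s * ε s i / δ|
      ≤ (2:ℝ) ^ n * (H * δ * n / 2) := by
    calc |∑ s : Fin n → Bool, R s * ε s i / δ|
        ≤ ∑ s : Fin n → Bool, |R s * ε s i / δ| := Finset.abs_sum_le_sum_abs _ _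
      _ ≤ ∑ s : Fin n → Bool, H * δ * n / 2 := by
          apply Finset.sum_le_sum
          intro s _
          have hεabs : |ε s i| = 1 := by
            rcases hε1 s i with h | h <;> rw [h] <;> norm_num
          rw [abs_div, abs_mul, hεabs, mul_one, abs_of_pos hδ]
          rw [div_le_iff₀ hδ]
          calc |R s| ≤ H * δ ^ 2 * n / 2 := hRle s
            _ = H * δ * n / 2 * δ := by ring
      _ = (2:ℝ) ^ n * (H * δ * n / 2) := by
          rw [Finset.sum_const, Finset.card_univ, Fintype.card_fun, nsmul_eq_mul]
          push_cast
          simp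
  -- put everything together
  have hsum : (∑ s : Fin n → Bool,
      (f (x + δ • Δ s) - f x) / (δ * ε s i))
      = (2:ℝ) ^ n * L (e i) + ∑ s : Fin n → Bool, R s * ε s i / δ := by
    rw [Finset.sum_congr rfl fun s _ => hterm s, Finset.sum_add_distrib, hmain]
  have h2n : ((2:ℝ) ^ n) ≠ 0 := by positivity
  rw [hsum, hgrad]
  have : ((2:ℝ) ^ n * L (e i) + ∑ s : Fin n → Bool, R s * ε s i / δ) / 2 ^ n - L (e i)
      = (∑ s : Fin n → Bool, R s * ε s i / δ) / 2 ^ n := by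
    field_simp
    ring
  rw [this, abs_div, abs_of_pos (by positivity : (0:ℝ) < (2:ℝ) ^ n),
    div_le_iff₀ (by positivity : (0:ℝ) < (2:ℝ) ^ n)]
  calc |∑ s : Fin n → Bool, R s * ε s i / δ| ≤ (2:ℝ) ^ n * (H * δ * n / 2) := herr
    _ = H * ↑n * δ / 2 * 2 ^ n := by ring
end

section
/- Let f : ℝⁿ → ℝ be continuously differentiable, x ∈ ℝⁿ, δ > 0, and let a₁,…,aₘ ∈ ℝⁿ (m ≥ 2) with |⟨∇f(x), aⱼ⟩| ≤ C for all j. Let Δ¹,…,Δᵏ be independent random vectors, each uniform on {−1,1}ᵐ, and for each l and i set yᵢˡ = (f(x + δΣⱼΔⱼˡaⱼ) − f(x))/(δΔᵢˡ). Suppose there is K ≥ 0 such that for every sign vector Δ ∈ {−1,1}ᵐ and every i, |(f(x + δΣⱼΔⱼaⱼ) − f(x))/(δΔᵢ) − ⟨∇f(x), aᵢ⟩ − Σ_{j≠i}ΔⱼΔᵢ⟨∇f(x), aⱼ⟩| ≤ Kδ. Let η ∈ ℝᵐ be the error vector with coordinates ηᵢ = (1/k)Σ_{l=1}^{k} yᵢˡ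 − ⟨∇f(x), aᵢ⟩. Then for every t > 2mKδ, P(‖η‖₂ ≥ t) ≤ 2m·exp(−k·t²/(8m²(m−1)C²)). -/
open scoped RealInnerProductSpace

namespace Stmt5Aux

open Finset Real


noncomputable def eps (b : Bool) : ℝ := if b then 1 else -1

lemma abs_eps (b : Bool) : |eps b| = 1 := by cases b <;> simp [eps]

lemma eps_flip (b : Bool) : eps (!b) = - eps b := by cases b <;> simp [eps]

lemma sum_eps_mul_eps {m : ℕ} {j i : Fin m} (hji : j ≠ i) :
    ∑ τ : Fin m → Bool, eps (τ j) * eps (τ i) = 0 := by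
  classical
  set φ : (Fin m → Bool) ≃ (Fin m → Bool) :=
    { toFun := fun τ => Function.update τ j (!(τ j))
      invFun := fun τ => Function.update τ j (!(τ j))
      left_inv := by
        intro τ; funext l
        by_cases h : l = j <;> simp [h, Function.update]
      right_inv := by
        intro τ; funext l
        by_cases h : l = j <;> simp [h, Function.update] } with hφ
  have key : ∀ τ : Fin m → Bool,
      eps ((φ τ) j) * eps ((φ τ) i) = -(eps (τ j) * eps (τ i)) := by
    intro τ
    have h1 : (φ τ) j = !(τ j) := by simp [hφ]
    have h2 : (φ τ) i = τ i := by simp [hφ, Function.update_of_ne (Ne.symm hji)]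
    rw [h1, h2, eps_flip]; ring
  have := Equiv.sum_comp φ (fun τ => eps (τ j) * eps (τ i))
  have h2 : ∑ τ : Fin m → Bool, eps (τ j) * eps (τ i)
      = -∑ τ : Fin m → Bool, eps (τ j) * eps (τ i) := by
    conv_lhs => rw [← this]
    rw [← Finset.sum_neg_distrib]
    exact Finset.sum_congr rfl fun τ _ => key τ
  linarith


lemma exp_le_convex (z lam B : ℝ) (hB : 0 < B) (hz : |z| ≤ B) :
    exp (lam * z) ≤ cosh (lam * B) + (z / B) * sinh (lam * B) := by
  obtain ⟨hz1, hz2⟩ := abs_le.mp hz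
  set θ : ℝ := (B + z) / (2 * B) with hθdef
  have hθ0 : 0 ≤ θ := by
    apply div_nonneg <;> linarith
  have hθ1 : 0 ≤ 1 - θ := by
    rw [hθdef, sub_nonneg, div_le_one (by linarith)]; linarith
  have hsum : θ + (1 - θ) = 1 := by ring
  have hcomb : θ • (lam * B) + (1 - θ) • (-(lam * B)) = lam * z := by
    simp only [smul_eq_mul, hθdef]; field_simp; ring
  have := convexOn_exp.2 (Set.mem_univ (lam * B)) (Set.mem_univ (-(lam * B)))
    hθ0 hθ1 hsum
  rw [hcomb] at this
  calc exp (lam * z) ≤ θ • exp (lam * B) + (1 - θ) • exp (-(lam * B)) := this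
    _ = cosh (lam * B) + (z / B) * sinh (lam * B) := by
        rw [Real.cosh_eq, Real.sinh_eq]
        simp only [smul_eq_mul, hθdef]
        field_simp
        ring


lemma mgf_bound {m : ℕ} (W : (Fin m → Bool) → ℝ) (B lam : ℝ) (hB : 0 < B)
    (hbound : ∀ τ, |W τ| ≤ B) (hmean : ∑ τ, W τ = 0) :
    ∑ τ : Fin m → Bool, exp (lam * W τ) ≤ 2 ^ m * exp (lam ^ 2 * B ^ 2 / 2) := by
  have step1 : ∑ τ : Fin m → Bool, exp (lam * W τ)
      ≤ ∑ τ : Fin m → Bool, (cosh (lam * B) + (W τ / B) * sinh (lam * B)) :=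
    Finset.sum_le_sum fun τ _ => exp_le_convex (W τ) lam B hB (hbound τ)
  have card_eq : (Finset.univ : Finset (Fin m → Bool)).card = 2 ^ m := by
    simp [Finset.card_univ]
  have step2 : ∑ τ : Fin m → Bool, (cosh (lam * B) + (W τ / B) * sinh (lam * B))
      = 2 ^ m * cosh (lam * B) := by
    rw [Finset.sum_add_distrib, Finset.sum_const, card_eq]
    have : ∑ τ : Fin m → Bool, W τ / B * sinh (lam * B)
        = (∑ τ, W τ) / B * sinh (lam * B) := by
      rw [Finset.sum_div, Finset.sum_mul]
    rw [this, hmean]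
    simp [nsmul_eq_mul, mul_comm]
  have step3 : cosh (lam * B) ≤ exp (lam ^ 2 * B ^ 2 / 2) := by
    have := Real.cosh_le_exp_half_sq (lam * B)
    rwa [mul_pow] at this
  calc ∑ τ : Fin m → Bool, exp (lam * W τ)
      ≤ 2 ^ m * cosh (lam * B) := step1.trans_eq step2
    _ ≤ 2 ^ m * exp (lam ^ 2 * B ^ 2 / 2) := by
        have : (0:ℝ) < 2 ^ m := by positivity
        nlinarith [step3]

lemma chernoff_count (m k : ℕ) (W : (Fin m → Bool) → ℝ) (B : ℝ) (hB : 0 < B)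
    (hbound : ∀ τ, |W τ| ≤ B) (hmean : ∑ τ, W τ = 0) (s : ℝ) (hs : 0 < s)
    [DecidablePred fun σ : Fin k → Fin m → Bool => (k : ℝ) * s ≤ ∑ l, W (σ l)] :
    (((Finset.univ.filter fun σ : Fin k → Fin m → Bool =>
        (k : ℝ) * s ≤ ∑ l, W (σ l)).card : ℝ))
      ≤ 2 ^ (k * m) * Real.exp (-((k : ℝ) * s ^ 2) / (2 * B ^ 2)) := by
  classical
  set lam : ℝ := s / B ^ 2 with hlam
  have hlam0 : 0 < lam := by positivity
  set F := Finset.univ.filter fun σ : Fin k → Fin m → Bool =>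
      (k : ℝ) * s ≤ ∑ l, W (σ l) with hF
  -- lower bound each term of the exponential sum on F
  have h1 : (F.card : ℝ) * exp (lam * ((k : ℝ) * s))
      ≤ ∑ σ ∈ F, exp (lam * ∑ l, W (σ l)) := by
    have := Finset.card_nsmul_le_sum F (fun σ => exp (lam * ∑ l, W (σ l)))
      (exp (lam * ((k : ℝ) * s))) (fun σ hσ => by
        have hσ' : (k : ℝ) * s ≤ ∑ l, W (σ l) := (Finset.mem_filter.mp hσ).2
        exact Real.exp_le_exp.mpr (by nlinarith))
    simpa [nsmul_eq_mul] using this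
  have h2 : ∑ σ ∈ F, exp (lam * ∑ l, W (σ l))
      ≤ ∑ σ : Fin k → Fin m → Bool, exp (lam * ∑ l, W (σ l)) :=
    Finset.sum_le_sum_of_subset_of_nonneg (Finset.filter_subset _ _)
      (fun σ _ _ => (Real.exp_pos _).le)
  have h3 : ∑ σ : Fin k → Fin m → Bool, exp (lam * ∑ l, W (σ l))
      = (∑ τ : Fin m → Bool, exp (lam * W τ)) ^ k := by
    have : ∀ σ : Fin k → Fin m → Bool,
        exp (lam * ∑ l, W (σ l)) = ∏ l, exp (lam * W (σ l)) := by
      intro σ; rw [Finset.mul_sum, Real.exp_sum]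
    rw [Finset.sum_congr rfl fun σ _ => this σ]
    rw [← Fintype.prod_sum fun _ τ => exp (lam * W τ)]
    simp
  have h4 := mgf_bound W B lam hB hbound hmean
  have hmgf0 : (0:ℝ) ≤ ∑ τ : Fin m → Bool, exp (lam * W τ) :=
    Finset.sum_nonneg fun τ _ => (Real.exp_pos _).le
  have h5 : (∑ τ : Fin m → Bool, exp (lam * W τ)) ^ k
      ≤ (2 ^ m * exp (lam ^ 2 * B ^ 2 / 2)) ^ k :=
    pow_le_pow_left₀ hmgf0 h4 k
  have h6 : (2 ^ m * exp (lam ^ 2 * B ^ 2 / 2) : ℝ) ^ k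
      = 2 ^ (m * k) * exp ((k : ℝ) * (lam ^ 2 * B ^ 2 / 2)) := by
    rw [mul_pow, ← pow_mul, ← Real.exp_nat_mul]
  -- combine
  have key : (F.card : ℝ) * exp (lam * ((k : ℝ) * s))
      ≤ 2 ^ (m * k) * exp ((k : ℝ) * (lam ^ 2 * B ^ 2 / 2)) := by
    calc (F.card : ℝ) * exp (lam * ((k : ℝ) * s)) ≤ _ := h1
      _ ≤ _ := h2
      _ = _ := h3
      _ ≤ _ := h5
      _ = _ := h6
  have hexp : exp ((k : ℝ) * (lam ^ 2 * B ^ 2 / 2)) / exp (lam * ((k : ℝ) * s))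
      = exp (-((k : ℝ) * s ^ 2) / (2 * B ^ 2)) := by
    rw [← Real.exp_sub]
    congr 1
    rw [hlam]
    field_simp
    ring
  have hepos := Real.exp_pos (lam * ((k : ℝ) * s))
  rw [mul_comm m k] at key
  calc (F.card : ℝ)
      = (F.card : ℝ) * exp (lam * ((k : ℝ) * s)) / exp (lam * ((k : ℝ) * s)) := by
        field_simp
    _ ≤ 2 ^ (k * m) * exp ((k : ℝ) * (lam ^ 2 * B ^ 2 / 2)) / exp (lam * ((k : ℝ) * s)) := by
        exact div_le_div_of_nonneg_right key hepos.le |>.trans_eq rfl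
    _ = 2 ^ (k * m) * exp (-((k : ℝ) * s ^ 2) / (2 * B ^ 2)) := by
        rw [mul_div_assoc, hexp]


set_option maxHeartbeats 1000000 in

lemma master {m k : ℕ} (hm : 2 ≤ m) (c : Fin m → ℝ) (C ρ t : ℝ)
    (hC : ∀ j, |c j| ≤ C) (hρ : 0 ≤ ρ) (ht : 2 * m * ρ < t)
    (y : (Fin m → Bool) → Fin m → ℝ)
    (hy : ∀ τ i, |y τ i - c i -
        ∑ j ∈ Finset.univ.erase i, eps (τ j) * eps (τ i) * c j| ≤ ρ)
    (η : (Fin k → Fin m → Bool) → Fin m → ℝ)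
    (hη : ∀ σ i, η σ i = (1 / (k : ℝ)) * (∑ l, y (σ l) i) - c i) :
    (({σ : Fin k → Fin m → Bool |
        t ≤ ‖(WithLp.equiv 2 (Fin m → ℝ)).symm (η σ)‖}.ncard : ℝ) / 2 ^ (k * m)) ≤
      2 * m * Real.exp (-((k : ℝ) * t ^ 2) /
        (8 * (m : ℝ) ^ 2 * ((m : ℝ) - 1) * C ^ 2)) := by
  classical
  have hC0 : 0 ≤ C := le_trans (abs_nonneg _) (hC ⟨0, by omega⟩)
  have hM2 : (2 : ℝ) ≤ (m : ℝ) := by exact_mod_cast hm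
  have ht0 : 0 < t := lt_of_le_of_lt (by positivity) ht
  have hρt : ρ < t / (2 * m) := by
    rw [lt_div_iff₀ (by positivity)]; linarith
  -- rewrite the norm
  have hnorm : ∀ σ : Fin k → Fin m → Bool,
      ‖(WithLp.equiv 2 (Fin m → ℝ)).symm (η σ)‖ = Real.sqrt (∑ i, (η σ i) ^ 2) := by
    intro σ
    rw [EuclideanSpace.norm_eq]
    congr 1
    refine Finset.sum_congr rfl fun i _ => ?_
    rw [WithLp.equiv_symm_apply, PiLp.toLp_apply, Real.norm_eq_abs, sq_abs]
  -- the set as a finset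
  have hS : ({σ : Fin k → Fin m → Bool |
      t ≤ ‖(WithLp.equiv 2 (Fin m → ℝ)).symm (η σ)‖}.ncard : ℝ)
      = ((Finset.univ.filter fun σ : Fin k → Fin m → Bool =>
          t ≤ ‖(WithLp.equiv 2 (Fin m → ℝ)).symm (η σ)‖).card : ℝ) := by
    congr 1
    rw [← Set.ncard_coe_finset]
    congr 1
    ext σ; simp only [Finset.coe_filter, Finset.mem_univ, true_and, Set.mem_setOf_eq]
  rw [hS]
  -- Z and remainder structure
  set Z : Fin m → (Fin m → Bool) → ℝ :=
    fun i τ => ∑ j ∈ Finset.univ.erase i, eps (τ j) * eps (τ i) * c j with hZdef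
  have hZbound : ∀ i τ, |Z i τ| ≤ ((m : ℝ) - 1) * C := by
    intro i τ
    calc |Z i τ| ≤ ∑ j ∈ Finset.univ.erase i, |eps (τ j) * eps (τ i) * c j| :=
          Finset.abs_sum_le_sum_abs _ _
      _ = ∑ j ∈ Finset.univ.erase i, |c j| := by
          refine Finset.sum_congr rfl fun j _ => ?_
          rw [abs_mul, abs_mul, abs_eps, abs_eps]; ring
      _ ≤ ∑ _j ∈ Finset.univ.erase i, C := Finset.sum_le_sum fun j _ => hC j
      _ = ((m : ℝ) - 1) * C := by
          rw [Finset.sum_const, Finset.card_erase_of_mem (Finset.mem_univ i)]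
          rw [Finset.card_univ, Fintype.card_fin, nsmul_eq_mul]
          congr 1
          have : 1 ≤ m := by omega
          push_cast [Nat.cast_sub this]
          ring
  have hZmean : ∀ i, ∑ τ : Fin m → Bool, Z i τ = 0 := by
    intro i
    rw [hZdef]
    rw [Finset.sum_comm]
    refine Finset.sum_eq_zero fun j hj => ?_
    have hji : j ≠ i := Finset.ne_of_mem_erase hj
    rw [← Finset.sum_mul, sum_eps_mul_eps hji, zero_mul]
  rcases Nat.eq_zero_or_pos k with hk | hk
  · -- k = 0 : trivial bound since probability ≤ 1 and RHS = 2m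
    subst hk
    have hcard1 : ((Finset.univ.filter fun σ : Fin 0 → Fin m → Bool =>
        t ≤ ‖(WithLp.equiv 2 (Fin m → ℝ)).symm (η σ)‖).card : ℝ) ≤ 1 := by
      have := Finset.card_filter_le (Finset.univ : Finset (Fin 0 → Fin m → Bool))
        (fun σ => t ≤ ‖(WithLp.equiv 2 (Fin m → ℝ)).symm (η σ)‖)
      have h2 : (Finset.univ : Finset (Fin 0 → Fin m → Bool)).card = 1 := by
        simp [Finset.card_univ]
      exact_mod_cast this.trans_eq h2
    have hexp1 : Real.exp (-(((0:ℕ) : ℝ) * t ^ 2) /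
        (8 * (m : ℝ) ^ 2 * ((m : ℝ) - 1) * C ^ 2)) = 1 := by
      norm_num
    rw [hexp1]
    have : (2:ℝ) ^ (0 * m) = 1 := by norm_num
    rw [this, div_one, mul_one]
    linarith
  have hk0 : (0 : ℝ) < (k : ℝ) := by exact_mod_cast hk
  -- error decomposition
  have hη_err : ∀ σ (i : Fin m), |η σ i - (1 / (k:ℝ)) * ∑ l, Z i (σ l)| ≤ ρ := by
    intro σ i
    have hdecomp : η σ i - (1 / (k:ℝ)) * ∑ l, Z i (σ l)
        = (1 / (k:ℝ)) * ∑ l, (y (σ l) i - c i - Z i (σ l)) := by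
      rw [hη]
      rw [Finset.sum_sub_distrib, Finset.sum_sub_distrib, Finset.sum_const,
        Finset.card_univ, Fintype.card_fin, nsmul_eq_mul]
      field_simp
    rw [hdecomp, abs_mul, abs_of_nonneg (by positivity : (0:ℝ) ≤ 1 / (k:ℝ))]
    calc (1 / (k:ℝ)) * |∑ l, (y (σ l) i - c i - Z i (σ l))|
        ≤ (1 / (k:ℝ)) * ∑ l : Fin k, ρ := by
          refine mul_le_mul_of_nonneg_left ?_ (by positivity)
          exact (Finset.abs_sum_le_sum_abs _ _).trans
            (Finset.sum_le_sum fun l _ => hy (σ l) i)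
      _ = ρ := by
          rw [Finset.sum_const, Finset.card_univ, Fintype.card_fin, nsmul_eq_mul]
          field_simp
  rcases eq_or_lt_of_le hC0 with hCz | hCpos
  · -- C = 0 : the event is empty
    have hceq : ∀ j, c j = 0 := fun j =>
      abs_eq_zero.mp (le_antisymm (le_of_le_of_eq (hC j) hCz.symm) (abs_nonneg _))
    have hZ0 : ∀ i τ, Z i τ = 0 := by
      intro i τ; rw [hZdef]
      exact Finset.sum_eq_zero fun j _ => by rw [hceq j, mul_zero]
    have hηb : ∀ σ (i : Fin m), |η σ i| ≤ ρ := by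
      intro σ i
      have := hη_err σ i
      have hz : ∑ l, Z i (σ l) = 0 := Finset.sum_eq_zero fun l _ => hZ0 i (σ l)
      rwa [hz, mul_zero, sub_zero] at this
    have hempty : (Finset.univ.filter fun σ : Fin k → Fin m → Bool =>
        t ≤ ‖(WithLp.equiv 2 (Fin m → ℝ)).symm (η σ)‖) = ∅ := by
      refine Finset.filter_eq_empty_iff.mpr fun σ _ => ?_
      rw [hnorm σ, not_le]
      have hsum : ∑ i, (η σ i) ^ 2 ≤ ∑ _i : Fin m, ρ ^ 2 := by
        refine Finset.sum_le_sum fun i _ => ?_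
        have := hηb σ i
        nlinarith [abs_nonneg (η σ i), sq_abs (η σ i)]
      have hsum2 : ∑ _i : Fin m, ρ ^ 2 = (m : ℝ) * ρ ^ 2 := by
        rw [Finset.sum_const, Finset.card_univ, Fintype.card_fin, nsmul_eq_mul]
      have hkey : 4 * (m:ℝ) ^ 2 * ρ ^ 2 < t ^ 2 := by
        nlinarith [mul_pos (sub_pos.mpr ht) (show (0:ℝ) < t + 2 * m * ρ by positivity)]
      have hkey2 : (m:ℝ) * ρ ^ 2 ≤ 4 * (m:ℝ) ^ 2 * ρ ^ 2 := by
        nlinarith [mul_nonneg (show (0:ℝ) ≤ 4 * (m:ℝ)^2 - m by nlinarith) (sq_nonneg ρ)]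
      have hlt : ∑ i, (η σ i) ^ 2 < t ^ 2 := by linarith
      calc Real.sqrt (∑ i, (η σ i) ^ 2) < Real.sqrt (t ^ 2) := by
            apply Real.sqrt_lt_sqrt (Finset.sum_nonneg fun i _ => sq_nonneg _) hlt
        _ = t := by rw [Real.sqrt_sq ht0.le]
    rw [hempty]
    simp only [Finset.card_empty, Nat.cast_zero, zero_div]
    positivity
  -- main case : C > 0
  set B : ℝ := ((m : ℝ) - 1) * C with hBdef
  have hB : 0 < B := mul_pos (by linarith) hCpos
  set rtM : ℝ := Real.sqrt (m : ℝ) with hrtMdef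
  have hrtM0 : 0 < rtM := Real.sqrt_pos.mpr (by linarith)
  have hrtM_sq : rtM ^ 2 = (m : ℝ) := Real.sq_sqrt (by linarith)
  have hrtM_le : rtM ≤ (m : ℝ) := by nlinarith
  set s : ℝ := t / rtM - ρ with hsdef
  have hs_lb : t / (2 * rtM) < s := by
    have h1 : ρ < t / (2 * rtM) := by
      refine hρt.trans_le ?_
      apply div_le_div_of_nonneg_left ht0.le (by positivity) (by linarith)
    have h2 : t / rtM = t / (2 * rtM) + t / (2 * rtM) := by
      field_simp; ring
    rw [hsdef, h2]; linarith
  have hs0 : 0 < s := lt_trans (by positivity) hs_lb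
  -- union bound over coordinates
  have hsubset : (Finset.univ.filter fun σ : Fin k → Fin m → Bool =>
      t ≤ ‖(WithLp.equiv 2 (Fin m → ℝ)).symm (η σ)‖)
      ⊆ Finset.univ.biUnion (fun i : Fin m =>
        Finset.univ.filter fun σ : Fin k → Fin m → Bool => t / rtM ≤ |η σ i|) := by
    intro σ hσ
    have hσ' : t ≤ Real.sqrt (∑ i, (η σ i) ^ 2) := by
      have := (Finset.mem_filter.mp hσ).2; rwa [hnorm σ] at this
    have hsnn : (0:ℝ) ≤ ∑ i, (η σ i) ^ 2 := Finset.sum_nonneg fun i _ => sq_nonneg _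
    have hsq : t ^ 2 ≤ ∑ i, (η σ i) ^ 2 := by
      have h := Real.sq_sqrt hsnn
      nlinarith [Real.sqrt_nonneg (∑ i, (η σ i) ^ 2)]
    by_contra hcon
    simp only [Finset.mem_biUnion, Finset.mem_filter, Finset.mem_univ, true_and,
      not_exists, not_le] at hcon
    have hlt : ∀ i : Fin m, (η σ i) ^ 2 < t ^ 2 / m := by
      intro i
      have h1 := hcon i
      have h3 : |η σ i| ^ 2 < (t / rtM) ^ 2 := by
        apply pow_lt_pow_left₀ h1 (abs_nonneg _) (by norm_num)
      rw [sq_abs] at h3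
      have h4 : (t / rtM) ^ 2 = t ^ 2 / m := by rw [div_pow, hrtM_sq]
      linarith
    have hne : (Finset.univ : Finset (Fin m)).Nonempty := ⟨⟨0, by omega⟩, Finset.mem_univ _⟩
    have hlt2 := Finset.sum_lt_sum_of_nonempty hne fun i _ => hlt i
    rw [Finset.sum_const, Finset.card_univ, Fintype.card_fin, nsmul_eq_mul] at hlt2
    have hmm : (m:ℝ) * (t ^ 2 / m) = t ^ 2 := by field_simp
    linarith
  -- per-coordinate inclusion into one-sided events
  have hGsub : ∀ i : Fin m,
      (Finset.univ.filter fun σ : Fin k → Fin m → Bool => t / rtM ≤ |η σ i|)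
      ⊆ (Finset.univ.filter fun σ : Fin k → Fin m → Bool =>
          (k:ℝ) * s ≤ ∑ l, Z i (σ l))
        ∪ (Finset.univ.filter fun σ : Fin k → Fin m → Bool =>
          (k:ℝ) * s ≤ ∑ l, (fun τ => -(Z i τ)) (σ l)) := by
    intro i σ hσ
    have h1 : t / rtM ≤ |η σ i| := (Finset.mem_filter.mp hσ).2
    have h2 := hη_err σ i
    have h3 : s ≤ |(1 / (k:ℝ)) * ∑ l, Z i (σ l)| := by
      have h := abs_sub_abs_le_abs_sub (η σ i) ((1 / (k:ℝ)) * ∑ l, Z i (σ l))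
      rw [hsdef]; linarith
    rw [abs_mul, abs_of_nonneg (by positivity : (0:ℝ) ≤ 1 / (k:ℝ))] at h3
    have h4 : (k:ℝ) * s ≤ |∑ l, Z i (σ l)| := by
      have h := mul_le_mul_of_nonneg_left h3 hk0.le
      calc (k:ℝ) * s ≤ (k:ℝ) * (1 / (k:ℝ) * |∑ l, Z i (σ l)|) := h
        _ = |∑ l, Z i (σ l)| := by
            rw [← mul_assoc, mul_one_div_cancel hk0.ne', one_mul]
    rcases le_abs.mp h4 with h5 | h5
    · exact Finset.mem_union_left _ (Finset.mem_filter.mpr ⟨Finset.mem_univ _, h5⟩)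
    · refine Finset.mem_union_right _ (Finset.mem_filter.mpr ⟨Finset.mem_univ _, ?_⟩)
      rw [← Finset.sum_neg_distrib] at h5
      exact h5
  -- counting bound for each coordinate
  have hcount : ∀ i : Fin m,
      (((Finset.univ.filter fun σ : Fin k → Fin m → Bool =>
          t / rtM ≤ |η σ i|).card : ℝ))
      ≤ 2 * (2 ^ (k * m) * Real.exp (-((k:ℝ) * s ^ 2) / (2 * B ^ 2))) := by
    intro i
    have h1 := chernoff_count m k (Z i) B hB (hZbound i) (hZmean i) s hs0
    have h2 := chernoff_count m k (fun τ => -(Z i τ)) B hB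
      (fun τ => by rw [abs_neg]; exact hZbound i τ)
      (by rw [Finset.sum_neg_distrib, hZmean i, neg_zero]) s hs0
    have h3 := Finset.card_le_card (hGsub i)
    have h4 := Finset.card_union_le
      (Finset.univ.filter fun σ : Fin k → Fin m → Bool => (k:ℝ) * s ≤ ∑ l, Z i (σ l))
      (Finset.univ.filter fun σ : Fin k → Fin m → Bool =>
        (k:ℝ) * s ≤ ∑ l, (fun τ => -(Z i τ)) (σ l))
    have h5 := h3.trans h4
    have h5' := (Nat.cast_le (α := ℝ)).mpr h5
    rw [Nat.cast_add] at h5'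
    linarith
  -- assemble
  have hFcard : ((Finset.univ.filter fun σ : Fin k → Fin m → Bool =>
      t ≤ ‖(WithLp.equiv 2 (Fin m → ℝ)).symm (η σ)‖).card : ℝ)
      ≤ (m : ℝ) * (2 * (2 ^ (k * m) * Real.exp (-((k:ℝ) * s ^ 2) / (2 * B ^ 2)))) := by
    have h1 := (Finset.card_le_card hsubset).trans (Finset.card_biUnion_le)
    have h2 : ((Finset.univ.filter fun σ : Fin k → Fin m → Bool =>
        t ≤ ‖(WithLp.equiv 2 (Fin m → ℝ)).symm (η σ)‖).card : ℝ)
        ≤ ∑ i : Fin m, ((Finset.univ.filter fun σ : Fin k → Fin m → Bool =>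
            t / rtM ≤ |η σ i|).card : ℝ) := by
      exact_mod_cast h1
    calc _ ≤ _ := h2
      _ ≤ ∑ _i : Fin m, 2 * (2 ^ (k * m) * Real.exp (-((k:ℝ) * s ^ 2) / (2 * B ^ 2))) :=
          Finset.sum_le_sum fun i _ => hcount i
      _ = (m : ℝ) * (2 * (2 ^ (k * m) * Real.exp (-((k:ℝ) * s ^ 2) / (2 * B ^ 2)))) := by
          rw [Finset.sum_const, Finset.card_univ, Fintype.card_fin, nsmul_eq_mul]
  -- exponent comparison
  have hs2 : t ^ 2 / (4 * m) ≤ s ^ 2 := by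
    have h2 : (t / (2 * rtM)) ^ 2 ≤ s ^ 2 := by
      apply pow_le_pow_left₀ (by positivity) hs_lb.le
    have h3 : (t / (2 * rtM)) ^ 2 = t ^ 2 / (4 * m) := by
      rw [div_pow, mul_pow, hrtM_sq]; norm_num
    linarith
  have hexp_mono : Real.exp (-((k:ℝ) * s ^ 2) / (2 * B ^ 2))
      ≤ Real.exp (-((k:ℝ) * t ^ 2) / (8 * (m:ℝ) ^ 2 * ((m:ℝ) - 1) * C ^ 2)) := by
    apply Real.exp_le_exp.mpr
    rw [neg_div, neg_div, neg_le_neg_iff]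
    rw [div_le_div_iff₀
      (show (0:ℝ) < 8 * (m:ℝ) ^ 2 * ((m:ℝ) - 1) * C ^ 2 from
        mul_pos (mul_pos (mul_pos (by norm_num)
          (pow_pos (by linarith) 2)) (by linarith)) (pow_pos hCpos 2))
      (show (0:ℝ) < 2 * B ^ 2 by nlinarith [mul_pos hB hB])]
    rw [hBdef]
    have hmain : t ^ 2 * ((m:ℝ) - 1) ≤ 4 * (m:ℝ) ^ 2 * s ^ 2 := by
      have ha : t ^ 2 ≤ 4 * (m:ℝ) * s ^ 2 := by
        have := hs2
        rw [div_le_iff₀ (by positivity)] at this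
        linarith [this]
      nlinarith [sq_nonneg s, hM2]
    nlinarith [hk0.le, sq_nonneg C, hCpos, hM2, sq_nonneg t, sq_nonneg s,
      mul_nonneg hk0.le (sq_nonneg C),
      mul_le_mul_of_nonneg_left hmain (mul_nonneg hk0.le (mul_nonneg
        (mul_nonneg (by norm_num : (0:ℝ) ≤ 2) (by nlinarith : (0:ℝ) ≤ (m:ℝ) - 1))
        (sq_nonneg C)))]
  -- finish
  rw [div_le_iff₀ (by positivity : (0:ℝ) < 2 ^ (k * m))]
  calc ((Finset.univ.filter fun σ : Fin k → Fin m → Bool =>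
        t ≤ ‖(WithLp.equiv 2 (Fin m → ℝ)).symm (η σ)‖).card : ℝ)
      ≤ (m : ℝ) * (2 * (2 ^ (k * m) * Real.exp (-((k:ℝ) * s ^ 2) / (2 * B ^ 2)))) := hFcard
    _ ≤ (m : ℝ) * (2 * (2 ^ (k * m) *
        Real.exp (-((k:ℝ) * t ^ 2) / (8 * (m:ℝ) ^ 2 * ((m:ℝ) - 1) * C ^ 2)))) := by
        have h2 : (0:ℝ) < 2 ^ (k * m) := by positivity
        have hmpos : (0:ℝ) < (m:ℝ) := by linarith
        nlinarith [hexp_mono, Real.exp_pos (-((k:ℝ) * s ^ 2) / (2 * B ^ 2))]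
    _ = 2 * (m : ℝ) * Real.exp (-((k:ℝ) * t ^ 2) /
        (8 * (m:ℝ) ^ 2 * ((m:ℝ) - 1) * C ^ 2)) * 2 ^ (k * m) := by ring


end Stmt5Aux

set_option maxHeartbeats 1000000 in
/-- Tail bound on the error vector of averaged simultaneous
perturbation measurements. -/
theorem stmt_5 (n m k : ℕ) (hm : 2 ≤ m)
    (f : EuclideanSpace ℝ (Fin n) → ℝ) (hf : ContDiff ℝ 1 f)
    (x : EuclideanSpace ℝ (Fin n)) (δ : ℝ) (hδ : 0 < δ)
    (a : Fin m → EuclideanSpace ℝ (Fin n)) (C : ℝ)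
    (hC : ∀ j, |⟪gradient f x, a j⟫| ≤ C)
    (K : ℝ) (hK : 0 ≤ K)
    (hrem : ∀ Δ : Fin m → ℝ, (∀ j, Δ j = 1 ∨ Δ j = -1) → ∀ i : Fin m,
      abs ((f (x + δ • ∑ j, Δ j • a j) - f x) / (δ * Δ i) -
          ⟪gradient f x, a i⟫ -
          ∑ j ∈ Finset.univ.erase i, Δ j * Δ i * ⟪gradient f x, a j⟫) ≤ K * δ)
    (t : ℝ) (ht : 2 * m * K * δ < t) :
    (({σ : Fin k → Fin m → Bool |
        t ≤ ‖(WithLp.equiv 2 (Fin m → ℝ)).symm (fun i =>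
          (1 / (k : ℝ)) * (∑ l, (f (x + δ • ∑ j,
              (if σ l j then (1 : ℝ) else -1) • a j) - f x) /
            (δ * (if σ l i then (1 : ℝ) else -1))) -
          ⟪gradient f x, a i⟫)‖}.ncard : ℝ) / 2 ^ (k * m)) ≤
      2 * m * Real.exp (-((k : ℝ) * t ^ 2) /
        (8 * (m : ℝ) ^ 2 * ((m : ℝ) - 1) * C ^ 2)) := by
  have hy' : ∀ (τ : Fin m → Bool) (i : Fin m),
      |(f (x + δ • ∑ j, Stmt5Aux.eps (τ j) • a j) - f x) / (δ * Stmt5Aux.eps (τ i))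
        - ⟪gradient f x, a i⟫
        - ∑ j ∈ Finset.univ.erase i,
            Stmt5Aux.eps (τ j) * Stmt5Aux.eps (τ i) * ⟪gradient f x, a j⟫| ≤ K * δ := by
    intro τ i
    exact hrem (fun j => Stmt5Aux.eps (τ j))
      (fun j => by cases h : τ j <;> simp [Stmt5Aux.eps, h]) i
  have key := Stmt5Aux.master (k := k) hm (fun j => ⟪gradient f x, a j⟫) C (K * δ) t hC
    (by positivity)
    (by linarith [ht, (by ring : 2 * (m:ℝ) * (K * δ) = 2 * (m:ℝ) * K * δ)])
    (fun τ i => (f (x + δ • ∑ j, Stmt5Aux.eps (τ j) • a j) - f x)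
      / (δ * Stmt5Aux.eps (τ i)))
    hy'
    (fun σ i =>
      (1 / (k : ℝ)) * (∑ l, (f (x + δ • ∑ j,
          (if σ l j then (1 : ℝ) else -1) • a j) - f x) /
        (δ * (if σ l i then (1 : ℝ) else -1))) -
      ⟪gradient f x, a i⟫)
    (fun σ i => rfl)
  exact key
end

section
/- In the setting of the averaged simultaneous perturbation measurement error: let f : ℝⁿ → ℝ be continuously differentiable, x ∈ ℝⁿ, δ > 0, a₁,…,aₘ ∈ ℝⁿ (m ≥ 2) with |⟨∇f(x), aⱼ⟩| ≤ C for all j, suppose the per-measurement remainder is bounded by Kδ as before, let t > 2mKδ and 0 < ε < 1, and let Δ¹,…,Δᵏ be independent uniform random vectors on {−1,1}ᵐ. If the number of averaging repetitions satisfies k ≥ (8m²(m−1)C²/t²)·log(2/ε), then the error vector η, with ηᵢ = (1/k)Σ_{l=1}^{k}(f(x + δΣⱼΔⱼˡaⱼ) − f(x))/(δΔᵢˡ) − ⟨∇f(x), aᵢ⟩, satisfies P(‖η‖₂ ≥ t) ≤ ε·m. -/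
open scoped RealInnerProductSpace
open Finset

lemma mgf_eq {ι : Type*} [Fintype ι] [DecidableEq ι] (c : ι → ℝ) :
    ∑ σ : ι → Bool, Real.exp (∑ i, c i * (if σ i then (1:ℝ) else -1))
      = ∏ i, (Real.exp (c i) + Real.exp (-c i)) := by
  simp_rw [Real.exp_sum]
  rw [← Fintype.prod_sum (fun i (b : Bool) => Real.exp (c i * (if b then (1:ℝ) else -1)))]
  refine Finset.prod_congr rfl fun i _ => ?_
  rw [Fintype.sum_bool]
  simp [add_comm]

lemma one_sided {ι : Type*} [Fintype ι] [DecidableEq ι] (d : ι → ℝ) (B c₀ lam : ℝ)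
    (hlam : 0 ≤ lam) (hB : ∀ i, |d i| ≤ B) :
    ((univ.filter fun σ : ι → Bool =>
        c₀ ≤ ∑ i, d i * (if σ i then (1:ℝ) else -1)).card : ℝ)
      ≤ (2:ℝ) ^ (Fintype.card ι) *
        Real.exp (lam ^ 2 * B ^ 2 / 2 * (Fintype.card ι) - lam * c₀) := by
  set S : (ι → Bool) → ℝ := fun σ => ∑ i, d i * (if σ i then (1:ℝ) else -1) with hS
  have key : ((univ.filter fun σ => c₀ ≤ S σ).card : ℝ) * Real.exp (lam * c₀)
      ≤ ∑ σ : ι → Bool, Real.exp (lam * S σ) := by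
    have h1 : ((univ.filter fun σ => c₀ ≤ S σ).card : ℝ) * Real.exp (lam * c₀)
        ≤ ∑ σ ∈ univ.filter fun σ => c₀ ≤ S σ, Real.exp (lam * S σ) := by
      rw [← nsmul_eq_mul]
      refine Finset.card_nsmul_le_sum _ _ _ fun σ hσ => ?_
      have := (Finset.mem_filter.mp hσ).2
      exact Real.exp_le_exp.mpr (mul_le_mul_of_nonneg_left this hlam)
    refine h1.trans (Finset.sum_le_sum_of_subset_of_nonneg (Finset.filter_subset _ _)
      fun σ _ _ => (Real.exp_pos _).le)
  have mgf : ∑ σ : ι → Bool, Real.exp (lam * S σ)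
      = ∏ i, (Real.exp (lam * d i) + Real.exp (-(lam * d i))) := by
    rw [← mgf_eq (fun i => lam * d i)]
    refine Finset.sum_congr rfl fun σ _ => ?_
    rw [hS]; rw [Finset.mul_sum]; ring_nf
  have prodle : ∏ i, (Real.exp (lam * d i) + Real.exp (-(lam * d i)))
      ≤ (2:ℝ) ^ (Fintype.card ι) * Real.exp (lam ^ 2 * B ^ 2 / 2 * (Fintype.card ι)) := by
    have step : ∀ i : ι, Real.exp (lam * d i) + Real.exp (-(lam * d i))
        ≤ 2 * Real.exp (lam ^ 2 * B ^ 2 / 2) := by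
      intro i
      have h2 : Real.exp (lam * d i) + Real.exp (-(lam * d i)) = 2 * Real.cosh (lam * d i) := by
        rw [Real.cosh_eq]; ring
      rw [h2]
      have h3 := Real.cosh_le_exp_half_sq (lam * d i)
      have h4 : (lam * d i) ^ 2 / 2 ≤ lam ^ 2 * B ^ 2 / 2 := by
        have : (d i) ^ 2 ≤ B ^ 2 := by
          have := hB i; nlinarith [abs_nonneg (d i), sq_abs (d i)]
        nlinarith [sq_nonneg lam]
      nlinarith [Real.exp_le_exp.mpr h4, Real.exp_pos ((lam * d i) ^ 2 / 2)]
    calc ∏ i, (Real.exp (lam * d i) + Real.exp (-(lam * d i)))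
        ≤ ∏ _i : ι, 2 * Real.exp (lam ^ 2 * B ^ 2 / 2) :=
          Finset.prod_le_prod (fun i _ => by positivity) (fun i _ => step i)
      _ = (2:ℝ) ^ (Fintype.card ι) * Real.exp (lam ^ 2 * B ^ 2 / 2 * (Fintype.card ι)) := by
          rw [Finset.prod_const, Finset.card_univ, mul_pow, ← Real.exp_nat_mul]
          ring_nf
  have hpos := Real.exp_pos (lam * c₀)
  have final := key.trans (le_of_eq_of_le mgf prodle)
  show ((univ.filter fun σ => c₀ ≤ S σ).card : ℝ) ≤ _
  calc ((univ.filter fun σ => c₀ ≤ S σ).card : ℝ)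
      ≤ (2:ℝ) ^ (Fintype.card ι) * Real.exp (lam ^ 2 * B ^ 2 / 2 * (Fintype.card ι))
        / Real.exp (lam * c₀) := by
        rw [le_div_iff₀ hpos]; exact key.trans (le_of_eq_of_le mgf prodle)
    _ = (2:ℝ) ^ (Fintype.card ι) *
        Real.exp (lam ^ 2 * B ^ 2 / 2 * (Fintype.card ι) - lam * c₀) := by
        rw [Real.exp_sub]; ring

lemma tail_bound {ι : Type*} [Fintype ι] [DecidableEq ι] (d : ι → ℝ) (B c₀ lam : ℝ)
    (hlam : 0 ≤ lam) (hB : ∀ i, |d i| ≤ B) :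
    ((univ.filter fun σ : ι → Bool =>
        c₀ ≤ |∑ i, d i * (if σ i then (1:ℝ) else -1)|).card : ℝ)
      ≤ 2 * (2:ℝ) ^ (Fintype.card ι) *
        Real.exp (lam ^ 2 * B ^ 2 / 2 * (Fintype.card ι) - lam * c₀) := by
  have hsub : (univ.filter fun σ : ι → Bool =>
        c₀ ≤ |∑ i, d i * (if σ i then (1:ℝ) else -1)|)
      ⊆ (univ.filter fun σ : ι → Bool => c₀ ≤ ∑ i, d i * (if σ i then (1:ℝ) else -1))
        ∪ (univ.filter fun σ : ι → Bool => c₀ ≤ ∑ i, (-d) i * (if σ i then (1:ℝ) else -1)) := by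
    intro σ hσ
    have h := (Finset.mem_filter.mp hσ).2
    rcases le_abs.mp h with h' | h'
    · exact Finset.mem_union_left _ (Finset.mem_filter.mpr ⟨Finset.mem_univ _, h'⟩)
    · refine Finset.mem_union_right _ (Finset.mem_filter.mpr ⟨Finset.mem_univ _, ?_⟩)
      rw [← Finset.sum_neg_distrib] at h'
      refine h'.trans_eq (Finset.sum_congr rfl fun i _ => by cases h : σ i <;> simp)
  have h1 := one_sided d B c₀ lam hlam hB
  have h2 := one_sided (-d) B c₀ lam hlam (fun i => by simpa using hB i)
  have hcard := Finset.card_union_le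
    (univ.filter fun σ : ι → Bool => c₀ ≤ ∑ i, d i * (if σ i then (1:ℝ) else -1))
    (univ.filter fun σ : ι → Bool => c₀ ≤ ∑ i, (-d) i * (if σ i then (1:ℝ) else -1))
  have hc : ((univ.filter fun σ : ι → Bool =>
      c₀ ≤ |∑ i, d i * (if σ i then (1:ℝ) else -1)|).card : ℝ)
      ≤ ((univ.filter fun σ : ι → Bool => c₀ ≤ ∑ i, d i * (if σ i then (1:ℝ) else -1)).card : ℝ)
        + ((univ.filter fun σ : ι → Bool => c₀ ≤ ∑ i, (-d) i * (if σ i then (1:ℝ) else -1)).card : ℝ) := by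
    exact_mod_cast (Finset.card_le_card hsub).trans hcard
  linarith

lemma per_index (k m : ℕ) (i : Fin m) (g : Fin m → ℝ) (C c₀ lam : ℝ)
    (hlam : 0 ≤ lam) (hC : ∀ j, |g j| ≤ C) :
    ((univ.filter fun σ : Fin k → Fin m → Bool =>
        c₀ ≤ |∑ l, ∑ j ∈ univ.erase i,
          (if σ l j then (1:ℝ) else -1) * (if σ l i then (1:ℝ) else -1) * g j|).card : ℝ)
      ≤ 2 * (2:ℝ) ^ (k * m) *
        Real.exp (lam ^ 2 * C ^ 2 / 2 * (k * m) - lam * c₀) := by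
  classical
  set Φ : (Fin k → Fin m → Bool) → (Fin k → Fin m → Bool) :=
    fun σ l j => if j = i then σ l i else (σ l j == σ l i) with hΦ
  have hΦi : ∀ σ l, Φ σ l i = σ l i := fun σ l => by simp [hΦ]
  have hΦj : ∀ σ l j, j ≠ i → (if Φ σ l j then (1:ℝ) else -1)
      = (if σ l j then (1:ℝ) else -1) * (if σ l i then (1:ℝ) else -1) := by
    intro σ l j hj
    simp only [hΦ, if_neg hj]
    cases h1 : σ l j <;> cases h2 : σ l i <;> simp
  have hinv : ∀ σ, Φ (Φ σ) = σ := by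
    intro σ; funext l j
    by_cases hj : j = i
    · subst hj; simp [hΦ]
    · simp only [hΦ, if_neg hj, if_pos rfl]
      cases h1 : σ l j <;> cases h2 : σ l i <;> simp
  -- T σ : the decoupled sum
  set T : (Fin k → Fin m → Bool) → ℝ :=
    fun σ => ∑ l, ∑ j ∈ univ.erase i, g j * (if σ l j then (1:ℝ) else -1) with hT
  set S : (Fin k → Fin m → Bool) → ℝ :=
    fun σ => ∑ l, ∑ j ∈ univ.erase i,
      (if σ l j then (1:ℝ) else -1) * (if σ l i then (1:ℝ) else -1) * g j with hSdef
  have hTS : ∀ σ, T (Φ σ) = S σ := by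
    intro σ
    refine Finset.sum_congr rfl fun l _ => Finset.sum_congr rfl fun j hj => ?_
    rw [hΦj σ l j (Finset.ne_of_mem_erase hj)]; ring
  have hST : ∀ σ, S (Φ σ) = T σ := by
    intro σ
    refine Finset.sum_congr rfl fun l _ => Finset.sum_congr rfl fun j hj => ?_
    rw [hΦj σ l j (Finset.ne_of_mem_erase hj), hΦi]
    cases σ l i <;> cases σ l j <;> norm_num
  have hcard1 : (univ.filter fun σ : Fin k → Fin m → Bool => c₀ ≤ |S σ|).card
      = (univ.filter fun σ : Fin k → Fin m → Bool => c₀ ≤ |T σ|).card := by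
    refine Finset.card_nbij' Φ Φ ?_ ?_ ?_ ?_
    · intro σ hσ
      rw [Finset.mem_coe, Finset.mem_filter] at hσ ⊢
      exact ⟨Finset.mem_univ _, by rw [hTS]; exact hσ.2⟩
    · intro σ hσ
      rw [Finset.mem_coe, Finset.mem_filter] at hσ ⊢
      exact ⟨Finset.mem_univ _, by rw [hST]; exact hσ.2⟩
    · exact fun σ _ => hinv σ
    · exact fun σ _ => hinv σ
  -- transfer to pair-indexed functions
  set d : Fin k × Fin m → ℝ := fun p => if p.2 = i then 0 else g p.2 with hd
  have hcard2 : (univ.filter fun σ : Fin k → Fin m → Bool => c₀ ≤ |T σ|).card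
      = (univ.filter fun ρ : Fin k × Fin m → Bool =>
          c₀ ≤ |∑ p, d p * (if ρ p then (1:ℝ) else -1)|).card := by
    have hsum : ∀ σ : Fin k → Fin m → Bool,
        ∑ p : Fin k × Fin m, d p * (if σ p.1 p.2 then (1:ℝ) else -1) = T σ := by
      intro σ
      rw [Fintype.sum_prod_type]
      refine Finset.sum_congr rfl fun l _ => ?_
      rw [← Finset.sum_erase (univ) (f := fun j => d (l, j) * (if σ l j then (1:ℝ) else -1))
        (a := i) (by simp [hd])]
      refine Finset.sum_congr rfl fun j hj => ?_
      simp [hd, Finset.ne_of_mem_erase hj]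
    refine Finset.card_nbij' (fun σ => fun p => σ p.1 p.2) (fun ρ => fun l j => ρ (l, j))
      ?_ ?_ ?_ ?_
    · intro σ hσ
      rw [Finset.mem_coe, Finset.mem_filter] at hσ ⊢
      exact ⟨Finset.mem_univ _, by rw [hsum σ]; exact hσ.2⟩
    · intro ρ hρ
      rw [Finset.mem_coe, Finset.mem_filter] at hρ ⊢
      refine ⟨Finset.mem_univ _, ?_⟩
      have := hsum (fun l j => ρ (l, j))
      simpa using this ▸ hρ.2
    · exact fun σ _ => rfl
    · exact fun ρ _ => rfl
  have := tail_bound d C c₀ lam hlam ?_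
  · rw [show ((univ.filter fun σ : Fin k → Fin m → Bool =>
        c₀ ≤ |∑ l, ∑ j ∈ univ.erase i,
          (if σ l j then (1:ℝ) else -1) * (if σ l i then (1:ℝ) else -1) * g j|).card)
      = (univ.filter fun ρ : Fin k × Fin m → Bool =>
          c₀ ≤ |∑ p, d p * (if ρ p then (1:ℝ) else -1)|).card from hcard1.trans hcard2]
    simpa [Fintype.card_prod] using this
  · intro p
    by_cases hp : p.2 = i
    · simp only [hd, if_pos hp, abs_zero]
      exact (abs_nonneg (g i)).trans (hC i)
    · simpa [hd, hp] using hC p.2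

set_option maxHeartbeats 2000000 in
/-- If the number of averaging repetitions satisfies
`k ≥ (8m²(m-1)C²/t²)·log(2/ε)`, then the error vector `η` of the averaged
simultaneous perturbation measurements (with `Δ¹, …, Δᵏ` independent uniform
sign vectors on `{-1,1}ᵐ`, encoded by `σ : Fin k → Fin m → Bool` with sign
`if · then 1 else -1`, probabilities being cardinalities divided by `2^(k·m)`)
satisfies `P(‖η‖₂ ≥ t) ≤ ε·m`. -/
theorem stmt_6 (n m k : ℕ) (hm : 2 ≤ m)
    (f : EuclideanSpace ℝ (Fin n) → ℝ) (hf : ContDiff ℝ 1 f)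
    (x : EuclideanSpace ℝ (Fin n)) (δ : ℝ) (hδ : 0 < δ)
    (a : Fin m → EuclideanSpace ℝ (Fin n)) (C : ℝ)
    (hC : ∀ j, |⟪gradient f x, a j⟫| ≤ C)
    (K : ℝ) (hK : 0 ≤ K)
    (hrem : ∀ Δ : Fin m → ℝ, (∀ j, Δ j = 1 ∨ Δ j = -1) → ∀ i : Fin m,
      abs ((f (x + δ • ∑ j, Δ j • a j) - f x) / (δ * Δ i) -
          ⟪gradient f x, a i⟫ -
          ∑ j ∈ Finset.univ.erase i, Δ j * Δ i * ⟪gradient f x, a j⟫) ≤ K * δ)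
    (t : ℝ) (ht : 2 * m * K * δ < t)
    (ε : ℝ) (hε0 : 0 < ε) (hε1 : ε < 1)
    (hk : (k : ℝ) ≥ 8 * (m : ℝ) ^ 2 * ((m : ℝ) - 1) * C ^ 2 / t ^ 2 *
      Real.log (2 / ε)) :
    (({σ : Fin k → Fin m → Bool |
        t ≤ ‖(WithLp.equiv 2 (Fin m → ℝ)).symm (fun i =>
          (1 / (k : ℝ)) * (∑ l, (f (x + δ • ∑ j,
              (if σ l j then (1 : ℝ) else -1) • a j) - f x) /
            (δ * (if σ l i then (1 : ℝ) else -1))) -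
          ⟪gradient f x, a i⟫)‖}.ncard : ℝ) / 2 ^ (k * m)) ≤ ε * m := by
  classical
  have hm1 : (1:ℝ) ≤ (m:ℝ) := by exact_mod_cast hm.trans' (by norm_num)
  have hm0 : (0:ℝ) < (m:ℝ) := by linarith
  have hmkδ : 0 ≤ (m:ℝ) * K * δ := by positivity
  have ht0 : 0 < t := by nlinarith
  set g : Fin m → ℝ := fun j => ⟪gradient f x, a j⟫ with hg
  have hC0 : 0 ≤ C := (abs_nonneg (g ⟨0, by omega⟩)).trans (hC _)
  -- η
  set η : (Fin k → Fin m → Bool) → Fin m → ℝ := fun σ i =>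
    (1 / (k : ℝ)) * (∑ l, (f (x + δ • ∑ j, (if σ l j then (1 : ℝ) else -1) • a j) - f x) /
      (δ * (if σ l i then (1 : ℝ) else -1))) - g i with hη
  -- measurement
  set M : (Fin k → Fin m → Bool) → Fin k → Fin m → ℝ := fun σ l i =>
    (f (x + δ • ∑ j, (if σ l j then (1 : ℝ) else -1) • a j) - f x) /
      (δ * (if σ l i then (1 : ℝ) else -1)) with hM
  set Sg : Fin m → (Fin k → Fin m → Bool) → ℝ := fun i σ =>
    ∑ l, ∑ j ∈ univ.erase i,
      (if σ l j then (1:ℝ) else -1) * (if σ l i then (1:ℝ) else -1) * g j with hSg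
  -- remainder bound
  have hMrem : ∀ (σ : Fin k → Fin m → Bool) (l : Fin k) (i : Fin m),
      |M σ l i - g i - ∑ j ∈ univ.erase i,
        (if σ l j then (1:ℝ) else -1) * (if σ l i then (1:ℝ) else -1) * g j| ≤ K * δ := by
    intro σ l i
    exact hrem (fun j => if σ l j then 1 else -1) (fun j => by cases h : σ l j <;> simp [h]) i
  -- norm formula
  have hn : ∀ v : Fin m → ℝ, ‖(WithLp.equiv 2 (Fin m → ℝ)).symm v‖
      = Real.sqrt (∑ i, v i ^ 2) := by
    intro v
    rw [EuclideanSpace.norm_eq]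
    congr 1
    refine Finset.sum_congr rfl fun i _ => ?_
    rw [WithLp.equiv_symm_apply, PiLp.toLp_apply, Real.norm_eq_abs, sq_abs]
  -- rewrite set as filter
  have hsetcard : {σ : Fin k → Fin m → Bool |
        t ≤ ‖(WithLp.equiv 2 (Fin m → ℝ)).symm (fun i => η σ i)‖}.ncard
      = (univ.filter fun σ : Fin k → Fin m → Bool =>
          t ≤ ‖(WithLp.equiv 2 (Fin m → ℝ)).symm (fun i => η σ i)‖).card := by
    rw [← Set.ncard_coe_finset]
    rw [Finset.coe_filter]
    simp only [Finset.mem_univ, true_and]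
  rw [show {σ : Fin k → Fin m → Bool |
        t ≤ ‖(WithLp.equiv 2 (Fin m → ℝ)).symm (fun i =>
          (1 / (k : ℝ)) * (∑ l, (f (x + δ • ∑ j,
              (if σ l j then (1 : ℝ) else -1) • a j) - f x) /
            (δ * (if σ l i then (1 : ℝ) else -1))) -
          g i)‖}.ncard
      = (univ.filter fun σ : Fin k → Fin m → Bool =>
          t ≤ ‖(WithLp.equiv 2 (Fin m → ℝ)).symm (fun i => η σ i)‖).card from hsetcard]
  rcases eq_or_lt_of_le hC0 with hCz | hCpos
  · -- C = 0 : the event is empty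
    have hgz : ∀ j, g j = 0 := fun j =>
      abs_eq_zero.mp (le_antisymm ((hC j).trans_eq hCz.symm) (abs_nonneg _))
    have hbound : ∀ σ i, |η σ i| ≤ K * δ := by
      intro σ i
      rcases Nat.eq_zero_or_pos k with hk0 | hkpos
      · subst hk0
        have : η σ i = 0 := by simp [hη, hgz i]
        rw [this, abs_zero]; positivity
      · have h1 : ∀ l, |M σ l i| ≤ K * δ := by
          intro l
          have h := hMrem σ l i
          simp only [hgz, mul_zero, Finset.sum_const_zero, sub_zero] at h
          exact h
        have h2 : η σ i = (1 / (k:ℝ)) * ∑ l, M σ l i := by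
          simp [hη, hM, hgz i]
        have hkpos' : (0:ℝ) < k := by exact_mod_cast hkpos
        have h3 : |∑ l, M σ l i| ≤ (k:ℝ) * (K * δ) := by
          refine (Finset.abs_sum_le_sum_abs _ _).trans ?_
          calc ∑ l, |M σ l i| ≤ ∑ _l : Fin k, K * δ := Finset.sum_le_sum fun l _ => h1 l
            _ = (k:ℝ) * (K * δ) := by
                rw [Finset.sum_const, Finset.card_univ, Fintype.card_fin, nsmul_eq_mul]
        rw [h2, abs_mul, abs_of_pos (show (0:ℝ) < 1/(k:ℝ) by positivity)]
        calc (1/(k:ℝ)) * |∑ l, M σ l i| ≤ (1/(k:ℝ)) * ((k:ℝ) * (K*δ)) := by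
              exact mul_le_mul_of_nonneg_left h3 (by positivity)
          _ = K * δ := by field_simp
    have hempty : (univ.filter fun σ : Fin k → Fin m → Bool =>
        t ≤ ‖(WithLp.equiv 2 (Fin m → ℝ)).symm (fun i => η σ i)‖) = ∅ := by
      refine Finset.filter_eq_empty_iff.mpr fun σ _ => ?_
      rw [hn]
      refine not_le.mpr ?_
      have hKδ0 : (0:ℝ) ≤ K * δ := by positivity
      have hsum : ∑ i, η σ i ^ 2 ≤ (m:ℝ) * (K*δ)^2 := by
        calc ∑ i, η σ i ^ 2 ≤ ∑ _i : Fin m, (K*δ)^2 :=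
              Finset.sum_le_sum fun i _ => by
                have := hbound σ i
                nlinarith [abs_nonneg (η σ i), sq_abs (η σ i)]
          _ = (m:ℝ) * (K*δ)^2 := by
              rw [Finset.sum_const, Finset.card_univ, Fintype.card_fin, nsmul_eq_mul]
      have hs1 : Real.sqrt (∑ i, η σ i ^ 2) ≤ Real.sqrt ((m:ℝ) * (K*δ)^2) :=
        Real.sqrt_le_sqrt hsum
      have heq : Real.sqrt ((m:ℝ)*(K*δ)^2) = Real.sqrt m * (K*δ) := by
        rw [Real.sqrt_mul (le_of_lt hm0), Real.sqrt_sq hKδ0]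
      have hsqm : Real.sqrt m ≤ m := by
        have h4 := Real.sqrt_le_sqrt (show (m:ℝ) ≤ (m:ℝ)^2 by nlinarith)
        rwa [Real.sqrt_sq hm0.le] at h4
      have hs2 : Real.sqrt m * (K*δ) ≤ m * (K*δ) :=
        mul_le_mul_of_nonneg_right hsqm hKδ0
      have hs3 : (m:ℝ) * (K*δ) < t := by nlinarith
      calc Real.sqrt (∑ i, η σ i ^ 2) ≤ Real.sqrt m * (K*δ) := heq ▸ hs1
        _ ≤ (m:ℝ) * (K*δ) := hs2
        _ < t := hs3
    rw [hempty]
    simp only [Finset.card_empty, Nat.cast_zero, zero_div]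
    positivity
  · -- main case : C > 0
    have hm2 : (2:ℝ) ≤ (m:ℝ) := by exact_mod_cast hm
    have hL : 0 < Real.log (2/ε) := Real.log_pos (by rw [lt_div_iff₀ hε0]; linarith)
    have ht2 : 0 < t^2 := by positivity
    have hkR : (0:ℝ) < k := by
      have hpos : 0 < 8 * (m:ℝ)^2 * ((m:ℝ)-1) * C^2 / t^2 * Real.log (2/ε) := by
        refine mul_pos (div_pos ?_ ht2) hL
        exact mul_pos (mul_pos (by positivity) (by linarith)) (by positivity : (0:ℝ) < C^2)
      linarith
    have hkpos : 0 < k := by exact_mod_cast hkR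
    have hkne : (k:ℝ) ≠ 0 := ne_of_gt hkR
    have hsqm0 : 0 < Real.sqrt m := Real.sqrt_pos.mpr hm0
    have hsqm : Real.sqrt m ≤ m := by
      have h4 := Real.sqrt_le_sqrt (show (m:ℝ) ≤ (m:ℝ)^2 by nlinarith)
      rwa [Real.sqrt_sq hm0.le] at h4
    set s₀ : ℝ := t / (2 * Real.sqrt m) with hs₀
    have hs₀pos : 0 < s₀ := by positivity
    have hs₀sq : s₀^2 = t^2/(4*m) := by
      rw [hs₀, div_pow, mul_pow, Real.sq_sqrt hm0.le]
      norm_num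
    have hKδs : K*δ ≤ s₀ := by
      have h1 : K*δ < t/(2*m) := by rw [lt_div_iff₀ (by positivity)]; linarith
      have h2 : t/(2*m) ≤ t/(2*Real.sqrt m) := by
        apply div_le_div_of_nonneg_left ht0.le (by positivity) (by linarith)
      linarith
    -- event inclusion
    have hincl : (univ.filter fun σ : Fin k → Fin m → Bool =>
        t ≤ ‖(WithLp.equiv 2 (Fin m → ℝ)).symm (fun i => η σ i)‖)
        ⊆ univ.biUnion (fun i : Fin m =>
            univ.filter fun σ => (k:ℝ) * s₀ ≤ |Sg i σ|) := by
      intro σ hσ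
      have hσ' : t ≤ Real.sqrt (∑ i, η σ i ^ 2) := by
        have h := (Finset.mem_filter.mp hσ).2; rwa [hn] at h
      have hdec : ∀ i, |η σ i - (1/(k:ℝ)) * Sg i σ| ≤ K * δ := by
        intro i
        have hsplit : η σ i - (1/(k:ℝ)) * Sg i σ
            = (1/(k:ℝ)) * ∑ l, (M σ l i - g i - ∑ j ∈ univ.erase i,
              (if σ l j then (1:ℝ) else -1) * (if σ l i then (1:ℝ) else -1) * g j) := by
        -- η σ i = (1/k) * ∑ M - g i
          rw [Finset.sum_sub_distrib, Finset.sum_sub_distrib,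
            Finset.sum_const, Finset.card_univ, Fintype.card_fin, nsmul_eq_mul]
          show (1 / (k : ℝ)) * (∑ l, M σ l i) - g i - (1/(k:ℝ)) * Sg i σ = _
          rw [hSg]
          field_simp
        rw [hsplit, abs_mul, abs_of_pos (show (0:ℝ) < 1/(k:ℝ) by positivity)]
        have h3 : |∑ l, (M σ l i - g i - ∑ j ∈ univ.erase i,
              (if σ l j then (1:ℝ) else -1) * (if σ l i then (1:ℝ) else -1) * g j)|
            ≤ (k:ℝ) * (K*δ) := by
          refine (Finset.abs_sum_le_sum_abs _ _).trans ?_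
          calc ∑ l, |M σ l i - g i - ∑ j ∈ univ.erase i,
                (if σ l j then (1:ℝ) else -1) * (if σ l i then (1:ℝ) else -1) * g j|
              ≤ ∑ _l : Fin k, K * δ := Finset.sum_le_sum fun l _ => hMrem σ l i
            _ = (k:ℝ) * (K * δ) := by
                rw [Finset.sum_const, Finset.card_univ, Fintype.card_fin, nsmul_eq_mul]
        calc (1/(k:ℝ)) * |∑ l, (M σ l i - g i - ∑ j ∈ univ.erase i,
              (if σ l j then (1:ℝ) else -1) * (if σ l i then (1:ℝ) else -1) * g j)|
            ≤ (1/(k:ℝ)) * ((k:ℝ) * (K*δ)) := mul_le_mul_of_nonneg_left h3 (by positivity)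
          _ = K * δ := by field_simp
      obtain ⟨i, hi⟩ : ∃ i, t/Real.sqrt m ≤ |η σ i| := by
        by_contra hcon
        push_neg at hcon
        have hlt : ∑ i, η σ i ^ 2 < (m:ℝ) * (t/Real.sqrt m)^2 := by
          have hstep : ∀ i : Fin m, η σ i ^ 2 < (t/Real.sqrt m)^2 := by
            intro i
            have h5 := hcon i
            calc η σ i ^ 2 = |η σ i| ^ 2 := (sq_abs _).symm
              _ < (t/Real.sqrt m)^2 := by
                  exact pow_lt_pow_left₀ h5 (abs_nonneg _) (by norm_num)
          calc ∑ i, η σ i ^ 2 < ∑ _i : Fin m, (t/Real.sqrt m)^2 :=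
                Finset.sum_lt_sum_of_nonempty ⟨⟨0, by omega⟩, Finset.mem_univ _⟩
                  (fun i _ => hstep i)
            _ = (m:ℝ) * (t/Real.sqrt m)^2 := by
                rw [Finset.sum_const, Finset.card_univ, Fintype.card_fin, nsmul_eq_mul]
        have hsumnn : (0:ℝ) ≤ ∑ i, η σ i ^ 2 := Finset.sum_nonneg fun i _ => sq_nonneg _
        have ht2' : t^2 ≤ ∑ i, η σ i ^ 2 := by
          have h6 := Real.sq_sqrt hsumnn
          nlinarith [Real.sqrt_nonneg (∑ i, η σ i ^ 2)]
        have heq2 : (m:ℝ) * (t/Real.sqrt m)^2 = t^2 := by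
          rw [div_pow, Real.sq_sqrt hm0.le]
          field_simp
        linarith
      refine Finset.mem_biUnion.mpr ⟨i, Finset.mem_univ _,
        Finset.mem_filter.mpr ⟨Finset.mem_univ _, ?_⟩⟩
      have h7 : t/Real.sqrt m - K*δ ≤ |(1/(k:ℝ)) * Sg i σ| := by
        have h8 := abs_sub_abs_le_abs_sub (η σ i) ((1/(k:ℝ)) * Sg i σ)
        have h9 := hdec i
        linarith
      have h9 : s₀ ≤ t/Real.sqrt m - K*δ := by
        have heq3 : t/Real.sqrt m = 2*s₀ := by
          rw [hs₀]; field_simp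
        linarith
      have h10 : |(1/(k:ℝ)) * Sg i σ| = |Sg i σ| / k := by
        rw [abs_mul, abs_of_pos (show (0:ℝ) < 1/(k:ℝ) by positivity)]; ring
      rw [h10] at h7
      calc (k:ℝ)*s₀ ≤ (k:ℝ) * (|Sg i σ|/k) :=
            mul_le_mul_of_nonneg_left (by linarith) hkR.le
        _ = |Sg i σ| := by field_simp
    -- per-index bound
    set lam : ℝ := s₀ / ((m:ℝ) * C^2) with hlamdef
    have hlam0 : 0 ≤ lam := by positivity
    have hexp : Real.exp (lam^2*C^2/2*((k:ℝ)*(m:ℝ)) - lam*((k:ℝ)*s₀)) ≤ ε/2 := by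
      have hE1 : lam^2*C^2/2*((k:ℝ)*(m:ℝ)) - lam*((k:ℝ)*s₀)
          = -((k:ℝ)*s₀^2/(2*(m:ℝ)*C^2)) := by
        rw [hlamdef]; field_simp; ring
      have hE2 : lam^2*C^2/2*((k:ℝ)*(m:ℝ)) - lam*((k:ℝ)*s₀)
          = -((k:ℝ)*t^2/(8*(m:ℝ)^2*C^2)) := by
        rw [hE1, hs₀sq]; field_simp; ring
      rw [hE2, show ε/2 = Real.exp (Real.log (ε/2)) from (Real.exp_log (by positivity)).symm]
      apply Real.exp_le_exp.mpr
      have hlogeq : Real.log (ε/2) = -Real.log (2/ε) := by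
        rw [← Real.log_inv, inv_div]
      rw [hlogeq, neg_le_neg_iff]
      -- log(2/ε) ≤ k t²/(8m²C²)
      have hmono : 8*(m:ℝ)^2*C^2/t^2*Real.log (2/ε) ≤ (k:ℝ) := by
        refine le_trans ?_ hk
        have h1 : 8*(m:ℝ)^2*C^2 ≤ 8*(m:ℝ)^2*((m:ℝ)-1)*C^2 := by
          nlinarith [mul_nonneg (show (0:ℝ) ≤ 8*(m:ℝ)^2*C^2 by positivity)
            (show (0:ℝ) ≤ (m:ℝ)-2 by linarith)]
        have h2 : 8*(m:ℝ)^2*C^2/t^2 ≤ 8*(m:ℝ)^2*((m:ℝ)-1)*C^2/t^2 :=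
          (div_le_div_iff_of_pos_right ht2).mpr h1
        exact mul_le_mul_of_nonneg_right h2 hL.le
      rw [div_mul_eq_mul_div, div_le_iff₀ ht2] at hmono
      rw [le_div_iff₀ (show (0:ℝ) < 8*(m:ℝ)^2*C^2 by positivity)]
      nlinarith [hmono]
    have hperi : ∀ i : Fin m, ((univ.filter fun σ : Fin k → Fin m → Bool =>
        (k:ℝ) * s₀ ≤ |Sg i σ|).card : ℝ) ≤ ε * 2^(k*m) := by
      intro i
      have hpi := per_index k m i g C ((k:ℝ)*s₀) lam hlam0 hC
      refine le_trans hpi ?_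
      have hcast : ((k*m : ℕ) : ℝ) = (k:ℝ)*(m:ℝ) := by push_cast; ring
      calc 2 * (2:ℝ)^(k*m) * Real.exp (lam^2*C^2/2*((k:ℝ)*(m:ℝ)) - lam*((k:ℝ)*s₀))
          ≤ 2 * (2:ℝ)^(k*m) * (ε/2) :=
            mul_le_mul_of_nonneg_left hexp (by positivity)
        _ = ε * 2^(k*m) := by ring
    -- assemble
    have h1 : (univ.filter fun σ : Fin k → Fin m → Bool =>
        t ≤ ‖(WithLp.equiv 2 (Fin m → ℝ)).symm (fun i => η σ i)‖).card
        ≤ ∑ i : Fin m, (univ.filter fun σ : Fin k → Fin m → Bool =>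
            (k:ℝ) * s₀ ≤ |Sg i σ|).card :=
      (Finset.card_le_card hincl).trans (Finset.card_biUnion_le)
    have hfinal : (((univ.filter fun σ : Fin k → Fin m → Bool =>
        t ≤ ‖(WithLp.equiv 2 (Fin m → ℝ)).symm (fun i => η σ i)‖).card : ℕ) : ℝ)
        ≤ (m:ℝ) * (ε * 2^(k*m)) := by
      calc (((univ.filter fun σ : Fin k → Fin m → Bool =>
            t ≤ ‖(WithLp.equiv 2 (Fin m → ℝ)).symm (fun i => η σ i)‖).card : ℕ) : ℝ)
          ≤ ∑ i : Fin m, ((univ.filter fun σ : Fin k → Fin m → Bool =>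
              (k:ℝ) * s₀ ≤ |Sg i σ|).card : ℝ) := by exact_mod_cast h1
        _ ≤ ∑ _i : Fin m, ε * 2^(k*m) := Finset.sum_le_sum fun i _ => hperi i
        _ = (m:ℝ) * (ε * 2^(k*m)) := by
            rw [Finset.sum_const, Finset.card_univ, Fintype.card_fin, nsmul_eq_mul]
    rw [div_le_iff₀ (show (0:ℝ) < 2^(k*m) by positivity)]
    calc (((univ.filter fun σ : Fin k → Fin m → Bool =>
          t ≤ ‖(WithLp.equiv 2 (Fin m → ℝ)).symm (fun i => η σ i)‖).card : ℕ) : ℝ)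
        ≤ (m:ℝ) * (ε * 2^(k*m)) := hfinal
      _ = ε * (m:ℝ) * 2^(k*m) := by ring
end

section
/- Let f : ℝⁿ → ℝ be continuously differentiable, ε₀ ≥ 0, c > 0, and let x : ℝ → ℝⁿ be continuously differentiable with x′(t) = −∇f(x(t)) + η(t) where ‖η(t)‖₂ ≤ ε₀ for all t. If ‖∇f(x(t))‖₂ ≥ ε₀ + c for every t in an interval [a, b], then f(x(b)) ≤ f(x(a)) − c·(ε₀ + c)·(b − a). -/
/-- Along a continuously differentiable solution of the
perturbed gradient flow `x'(t) = -∇f(x(t)) + η(t)` with `‖η(t)‖₂ ≤ ε₀` for all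
`t`: if `‖∇f(x(t))‖₂ ≥ ε₀ + c` on `[a, b]`, then
`f(x(b)) ≤ f(x(a)) - c(ε₀ + c)(b - a)`. -/
theorem stmt_15 (n : ℕ) (f : EuclideanSpace ℝ (Fin n) → ℝ) (hf : ContDiff ℝ 1 f)
    (ε₀ c : ℝ) (hε₀ : 0 ≤ ε₀) (hc : 0 < c)
    (x η : ℝ → EuclideanSpace ℝ (Fin n)) (hη_cont : Continuous η)
    (hx : ∀ t, HasDerivAt x (-gradient f (x t) + η t) t)
    (hηb : ∀ t, ‖η t‖ ≤ ε₀)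
    (a b : ℝ) (hab : a ≤ b)
    (hgrad : ∀ t ∈ Set.Icc a b, ε₀ + c ≤ ‖gradient f (x t)‖) :
    f (x b) ≤ f (x a) - c * (ε₀ + c) * (b - a) := by
  set g' : ℝ → ℝ := fun t =>
    inner ℝ (gradient f (x t)) (-gradient f (x t) + η t) + c * (ε₀ + c) with hg'
  have hd : ∀ t, HasDerivAt (fun t => f (x t) + c * (ε₀ + c) * t) (g' t) t := by
    intro t
    have hgr : HasGradientAt f (gradient f (x t)) (x t) :=
      (hf.differentiable one_ne_zero (x t)).hasGradientAt
    have h1 : HasDerivAt (fun t => f (x t))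
        (inner ℝ (gradient f (x t)) (-gradient f (x t) + η t)) t := by
      have := hgr.hasFDerivAt.comp_hasDerivAt t (hx t)
      exact this.congr_deriv (by simp [InnerProductSpace.toDual_apply_apply])
    exact (h1.add ((hasDerivAt_id t).const_mul (c * (ε₀ + c)))).congr_deriv (by simp [hg'])
  have hanti : AntitoneOn (fun t => f (x t) + c * (ε₀ + c) * t) (Set.Icc a b) := by
    apply antitoneOn_of_deriv_nonpos (convex_Icc a b)
    · have hxc : Continuous x := continuous_iff_continuousAt.2 fun t => (hx t).continuousAt
      exact ((hf.continuous.comp hxc).add (continuous_const.mul continuous_id)).continuousOn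
    · intro t ht
      exact ((hd t).differentiableAt).differentiableWithinAt
    · intro t ht
      rw [interior_Icc] at ht
      rw [(hd t).deriv]
      have hG := hgrad t (Set.mem_Icc.2 ⟨le_of_lt ht.1, le_of_lt ht.2⟩)
      set G := gradient f (x t)
      have h2 : (inner ℝ G (η t) : ℝ) ≤ ‖G‖ * ε₀ :=
        (real_inner_le_norm G (η t)).trans
          (mul_le_mul_of_nonneg_left (hηb t) (norm_nonneg _))
      have h3 : (inner ℝ G (-G + η t) : ℝ) = -‖G‖^2 + inner ℝ G (η t) := by
        rw [inner_add_right, inner_neg_right, real_inner_self_eq_norm_sq]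
      have h4 : c * (ε₀ + c) ≤ ‖G‖ * (‖G‖ - ε₀) := by nlinarith
      simp only [hg', h3]
      nlinarith
  have := hanti (Set.left_mem_Icc.2 hab) (Set.right_mem_Icc.2 hab) hab
  simp only at this
  linarith
end

section
/- Let f : ℝⁿ → ℝ be continuously differentiable and bounded below, let ε₀ ≥ 0, and let x : [0, ∞) → ℝⁿ be continuously differentiable with x′(t) = −∇f(x(t)) + η(t), where ‖η(t)‖₂ ≤ ε₀ for all t ≥ 0. Then for every c > 0 there exists a time t ≥ 0 such that ‖∇f(x(t))‖₂ < ε₀ + c; i.e., the perturbed gradient flow trajectory comes arbitrarily close to the set {x : ‖∇f(x)‖₂ ≤ ε₀}. -/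
/-- If `f` is continuously differentiable and bounded below,
and `x` is a continuously differentiable solution on `[0, ∞)` of the perturbed
gradient flow `x'(t) = -∇f(x(t)) + η(t)` with `‖η(t)‖₂ ≤ ε₀`, then for every
`c > 0` there is a time `t ≥ 0` with `‖∇f(x(t))‖₂ < ε₀ + c`; i.e. the
trajectory comes arbitrarily close to the set `{x : ‖∇f(x)‖₂ ≤ ε₀}`. -/
theorem stmt_16 (n : ℕ) (f : EuclideanSpace ℝ (Fin n) → ℝ) (hf : ContDiff ℝ 1 f)
    (hbdd : BddBelow (Set.range f)) (ε₀ : ℝ) (hε₀ : 0 ≤ ε₀)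
    (x η : ℝ → EuclideanSpace ℝ (Fin n)) (hη_cont : Continuous η)
    (hx : ∀ t, 0 ≤ t → HasDerivAt x (-gradient f (x t) + η t) t)
    (hηb : ∀ t, 0 ≤ t → ‖η t‖ ≤ ε₀) :
    ∀ c > 0, ∃ t ≥ (0 : ℝ), ‖gradient f (x t)‖ < ε₀ + c := by
  intro c hc
  by_contra hcon
  push_neg at hcon
  -- so for all t ≥ 0, ‖∇f(x t)‖ ≥ ε₀ + c
  set K : ℝ := (ε₀ + c) * c with hK
  have hKpos : 0 < K := mul_pos (by linarith) hc
  obtain ⟨b, hb⟩ := hbdd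
  -- derivative of g t = f (x t) + K * t is ≤ 0 for t ≥ 0
  have hdiff : ∀ y, HasGradientAt f (gradient f y) y :=
    fun y => (hf.differentiable one_ne_zero y).hasGradientAt
  have hg : ∀ t, 0 ≤ t → HasDerivAt (fun s => f (x s) + K * s)
      (inner ℝ (gradient f (x t)) (-gradient f (x t) + η t) + K) t := by
    intro t ht
    have h1 : HasDerivAt (fun s => f (x s))
        ((InnerProductSpace.toDual ℝ _ (gradient f (x t))) (-gradient f (x t) + η t)) t :=
      ((hdiff (x t)).hasFDerivAt).comp_hasDerivAt t (hx t ht)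
    have h2 : HasDerivAt (fun s : ℝ => K * s) K t := by
      simpa using (hasDerivAt_id t).const_mul K
    have h3 := h1.add h2
    rw [InnerProductSpace.toDual_apply_apply] at h3
    exact h3
  have hderiv_nonpos : ∀ t, 0 ≤ t →
      inner ℝ (gradient f (x t)) (-gradient f (x t) + η t) + K ≤ 0 := by
    intro t ht
    have hge : ε₀ + c ≤ ‖gradient f (x t)‖ := hcon t ht
    have h1 : inner ℝ (gradient f (x t)) (-gradient f (x t) + η t)
        = -‖gradient f (x t)‖ ^ 2 + inner ℝ (gradient f (x t)) (η t) := by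
      rw [inner_add_right, inner_neg_right, real_inner_self_eq_norm_sq]
    have h2 : inner ℝ (gradient f (x t)) (η t) ≤ ‖gradient f (x t)‖ * ε₀ :=
      (real_inner_le_norm _ _).trans
        (mul_le_mul_of_nonneg_left (hηb t ht) (norm_nonneg _))
    have h3 : (ε₀ + c) * c ≤ ‖gradient f (x t)‖ * (‖gradient f (x t)‖ - ε₀) := by
      apply mul_le_mul (hcon t ht) (by linarith) (by linarith) (norm_nonneg _)
    rw [h1]
    nlinarith
  -- hence g is antitone on [0, T]
  have key : ∀ T, 0 ≤ T → f (x T) + K * T ≤ f (x 0) := by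
    intro T hT
    have hanti : AntitoneOn (fun s => f (x s) + K * s) (Set.Icc 0 T) := by
      apply antitoneOn_of_deriv_nonpos (convex_Icc 0 T)
      · exact fun s hs => ((hg s hs.1).continuousAt).continuousWithinAt
      · intro s hs
        rw [interior_Icc] at hs
        exact ((hg s hs.1.le).differentiableAt).differentiableWithinAt
      · intro s hs
        rw [interior_Icc] at hs
        rw [(hg s hs.1.le).deriv]
        exact hderiv_nonpos s hs.1.le
    have := hanti (Set.left_mem_Icc.2 hT) (Set.right_mem_Icc.2 hT) hT
    simpa using this
  -- choose T large to contradict boundedness below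
  obtain ⟨T, hT0, hT⟩ : ∃ T : ℝ, 0 ≤ T ∧ f (x 0) - K * T < b := by
    refine ⟨max 0 ((f (x 0) - b) / K + 1), le_max_left _ _, ?_⟩
    have h1 : (f (x 0) - b) / K + 1 ≤ max 0 ((f (x 0) - b) / K + 1) := le_max_right _ _
    have h2 : K * ((f (x 0) - b) / K + 1) ≤ K * max 0 ((f (x 0) - b) / K + 1) :=
      mul_le_mul_of_nonneg_left h1 hKpos.le
    have h3 : K * ((f (x 0) - b) / K + 1) = (f (x 0) - b) + K := by
      field_simp
    nlinarith
  have := hb ⟨x T, rfl⟩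
  have := key T hT0
  linarith
end
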